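/- arXiv:1708.05949 — 4 statements merged into one kernel-verified Lean document; each statement's English description precedes it below -/
import Mathlib

section
/- Let F be a linearly ordered field and let L_1, …, L_n be a line arrangement in F² (n ≥ 0). Then the total number of regions of the arrangement equals n(n+1)/2 + 1, i.e., C(n+1, 2) + 1. -/
/-- The affine functional `p ↦ a i * p.1 + b i * p.2 - c i` cutting out the `i`-th line. -/
def arrLine {F : Type*} [Field F] [LinearOrder F] [IsStrictOrderedRing F] {n : ℕ} (a b c : Fin n → F)
    (i : Fin n) (p : F × F) : F :=
  a i * p.1 + b i * p.2 - c i

/-- The open region of the arrangement associated to the sign vector `ε`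
(`true ↦ +1`, `false ↦ -1`). -/
def arrRegion {F : Type*} [Field F] [LinearOrder F] [IsStrictOrderedRing F] {n : ℕ} (a b c : Fin n → F)
    (ε : Fin n → Bool) : Set (F × F) :=
  {p : F × F | ∀ i : Fin n, 0 < (if ε i then (1 : F) else -1) * arrLine a b c i p}

section aux

variable {F : Type*} [Field F] [LinearOrder F] [IsStrictOrderedRing F]

lemma arr_ex_cut (T : Finset F) :
    ∀ k : ℕ, k ≤ T.card → ∃ t : F, t ∉ T ∧ (T.filter (· < t)).card = k := by
  classical
  induction T using Finset.strongInduction with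
  | _ T IH =>
    intro k hk
    rcases T.eq_empty_or_nonempty with rfl | hT
    · simp at hk; subst hk; exact ⟨0, by simp⟩
    · set M := T.max' hT with hM
      rcases eq_or_lt_of_le hk with heq | hlt
      · refine ⟨M + 1, fun h => ?_, ?_⟩
        · have := T.le_max' _ h; linarith
        · rw [heq]; congr 1
          apply Finset.filter_true_of_mem
          intro x hx
          have := T.le_max' x hx; linarith
      · have hMT : M ∈ T := T.max'_mem hT
        set T' := T.erase M with hT'
        have hss : T' ⊂ T := Finset.erase_ssubset hMT
        have hcard' : T'.card = T.card - 1 := Finset.card_erase_of_mem hMT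
        have hk' : k ≤ T'.card := by omega
        obtain ⟨t', ht'T, ht'c⟩ := IH T' hss k hk'
        by_cases h1 : t' < M
        · refine ⟨t', fun h => ht'T (Finset.mem_erase.mpr
            ⟨by rintro rfl; exact absurd h1 (lt_irrefl _), h⟩), ?_⟩
          rw [← ht'c]; congr 1
          rw [hT', Finset.filter_erase]
          rw [Finset.erase_eq_of_notMem]
          simp only [Finset.mem_filter]
          rintro ⟨-, h2⟩; exact absurd h2 (not_lt.mpr h1.le)
        · push_neg at h1
          have hall : ∀ x ∈ T', x < t' := by
            intro x hx
            have hxM : x ≤ M := T.le_max' x (Finset.mem_of_mem_erase hx)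
            have hxne : x ≠ M := (Finset.mem_erase.mp hx).1
            exact lt_of_lt_of_le (lt_of_le_of_ne hxM hxne) h1
          have : (T'.filter (· < t')) = T' := Finset.filter_true_of_mem hall
          have hkc : k = T'.card := by rw [← ht'c, this]
          rcases T'.eq_empty_or_nonempty with hTe | hT'ne
          · refine ⟨M - 1, fun h => ?_, ?_⟩
            · have hle := T.le_max' _ h
              have hmem : M - 1 ∈ T' := Finset.mem_erase.mpr
                ⟨by intro h2; linarith [sub_lt_self M (zero_lt_one (α := F)), h2 ▸ le_refl M], h⟩
              rw [hTe] at hmem; exact absurd hmem (Finset.notMem_empty _)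
            · rw [hkc, hTe]
              simp only [Finset.card_empty]
              rw [Finset.card_eq_zero, Finset.filter_eq_empty_iff]
              intro x hx
              have hxM : x ≤ M := T.le_max' x hx
              have : x ∈ T' ∨ x = M := by
                rcases eq_or_ne x M with h | h
                · right; exact h
                · left; exact Finset.mem_erase.mpr ⟨h, hx⟩
              rcases this with h | rfl
              · rw [hTe] at h; exact absurd h (Finset.notMem_empty _)
              · push_neg; linarith
          · set M' := T'.max' hT'ne with hM'
            have hM'M : M' < M := by
              have h1 := (Finset.mem_erase.mp (T'.max'_mem hT'ne)).1
              have h2 := T.le_max' M' (Finset.mem_of_mem_erase (T'.max'_mem hT'ne))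
              exact lt_of_le_of_ne h2 h1
            refine ⟨(M' + M) / 2, ?_, ?_⟩
            · intro h
              have h1 : (M' + M) / 2 < M := by rw [add_div_two_lt_right]; exact hM'M
              have h2 : M' < (M' + M) / 2 := by rw [left_lt_add_div_two]; exact hM'M
              have hmem : (M'+M)/2 ∈ T' := Finset.mem_erase.mpr ⟨ne_of_lt h1, h⟩
              exact absurd (T'.le_max' _ hmem) (not_le.mpr h2)
            · have h1 : (M' + M) / 2 < M := by rw [add_div_two_lt_right]; exact hM'M
              have h2 : M' < (M' + M) / 2 := by rw [left_lt_add_div_two]; exact hM'M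
              rw [hkc]
              congr 1
              apply Finset.Subset.antisymm
              · intro x hx
                simp only [Finset.mem_filter] at hx
                exact Finset.mem_erase.mpr
                  ⟨by rintro rfl; exact absurd hx.2 (not_lt.mpr h1.le), hx.1⟩
              · intro x hx
                simp only [Finset.mem_filter]
                exact ⟨Finset.mem_of_mem_erase hx, lt_of_le_of_lt (T'.le_max' x hx) h2⟩

lemma arr_oneD {n : ℕ} (τ : Fin n → F) (hτ : Function.Injective τ) :
    Nat.card {ε : Fin n → Bool // ∃ t : F, ∀ i, if ε i then τ i < t else t < τ i} = n + 1 := by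
  classical
  have ex_cut := arr_ex_cut (Finset.image τ Finset.univ)
  have hcardT : (Finset.image τ Finset.univ).card = n := by
    rw [Finset.card_image_of_injective _ hτ, Finset.card_univ, Fintype.card_fin]
  have key : Function.Bijective
      (fun ε : {ε : Fin n → Bool // ∃ t : F, ∀ i, if ε i then τ i < t else t < τ i} =>
        (⟨(Finset.univ.filter (fun i => ε.1 i = true)).card, by
          have := Finset.card_filter_le (Finset.univ : Finset (Fin n)) (fun i => ε.1 i = true)
          simp only [Finset.card_univ, Fintype.card_fin] at this
          omega⟩ : Fin (n+1))) := by
    constructor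
    · rintro ⟨ε₁, t₁, h₁⟩ ⟨ε₂, t₂, h₂⟩ h
      simp only [Fin.mk.injEq] at h
      set S₁ := Finset.univ.filter (fun i => ε₁ i = true) with hS₁
      set S₂ := Finset.univ.filter (fun i => ε₂ i = true) with hS₂
      have hSeq : S₁ = S₂ := by
        by_contra hne
        have h12 : ¬ (S₁ ⊆ S₂) ∨ ¬ (S₂ ⊆ S₁) := by
          by_contra hc
          push_neg at hc
          exact hne (Finset.Subset.antisymm hc.1 hc.2)
        have claim : ∀ (ea eb : Fin n → Bool) (ta tb : F),
            (∀ i, if ea i then τ i < ta else ta < τ i) →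
            (∀ i, if eb i then τ i < tb else tb < τ i) →
            (Finset.univ.filter (fun i => ea i = true)).card =
              (Finset.univ.filter (fun i => eb i = true)).card →
            Finset.univ.filter (fun i => ea i = true) ⊆
              Finset.univ.filter (fun i => eb i = true) := by
          intro ea eb ta tb ha hb hcard i hi
          simp only [Finset.mem_filter, Finset.mem_univ, true_and] at hi ⊢
          by_contra hib
          have hssub : ¬ (Finset.univ.filter (fun j => eb j = true) ⊆
              Finset.univ.filter (fun j => ea j = true)) := by
            intro hsub
            have heq2 := Finset.eq_of_subset_of_card_le hsub (le_of_eq hcard)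
            have hi' : i ∈ Finset.filter (fun j => ea j = true) Finset.univ := by
              simp only [Finset.mem_filter, Finset.mem_univ, true_and]; exact hi
            rw [← heq2] at hi'
            simp only [Finset.mem_filter] at hi'
            exact hib hi'.2
          obtain ⟨j, hj1, hj2⟩ := Finset.not_subset.mp hssub
          simp only [Finset.mem_filter, Finset.mem_univ, true_and] at hj1 hj2
          have h1 := ha i; have h2 := hb i; have h3 := ha j; have h4 := hb j
          rw [if_pos hi] at h1
          rw [if_neg hib] at h2
          rw [if_neg hj2] at h3
          rw [if_pos hj1] at h4
          linarith
        rcases h12 with hc | hc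
        · exact hc (claim ε₁ ε₂ t₁ t₂ h₁ h₂ h)
        · exact hc (claim ε₂ ε₁ t₂ t₁ h₂ h₁ h.symm)
      have : ε₁ = ε₂ := by
        funext i
        have e1 : ε₁ i = true ↔ i ∈ S₁ := by simp [hS₁]
        have e2 : ε₂ i = true ↔ i ∈ S₂ := by simp [hS₂]
        rw [hSeq] at e1
        rw [← Bool.coe_iff_coe]
        rw [e1, e2]
      simp [this]
    · rintro ⟨k, hk⟩
      obtain ⟨t, htT, htc⟩ := ex_cut k (by omega)
      have htne : ∀ i, τ i ≠ t := by
        intro i h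
        exact htT (Finset.mem_image.mpr ⟨i, Finset.mem_univ i, h⟩)
      refine ⟨⟨fun i => decide (τ i < t), t, ?_⟩, ?_⟩
      · intro i
        by_cases h : τ i < t
        · simp [h]
        · simp only [h, decide_eq_false (by exact h), if_false]
          exact lt_of_le_of_ne (not_lt.mp h) (htne i).symm
      · simp only [Fin.mk.injEq, decide_eq_true_eq]
        rw [← htc]
        have : (Finset.image τ Finset.univ).filter (· < t) =
            (Finset.univ.filter (fun i => τ i < t)).image τ := by
          rw [Finset.filter_image]
        rw [this, Finset.card_image_of_injective _ hτ]
  have := Nat.card_eq_of_bijective _ key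
  rw [this, Nat.card_eq_fintype_card, Fintype.card_fin]

lemma arr_signIff (e : Bool) (A t T : F) (hA : A ≠ 0) :
    (0 < (if e then (1:F) else -1) * (A * (t - T)) ↔
      (if xor e (decide (A < 0)) then T < t else t < T)) := by
  rcases hA.lt_or_gt with h | h <;> cases e <;>
    simp only [decide_eq_true h, decide_eq_false (not_lt.mpr h.le), Bool.xor_false,
      Bool.xor_true, Bool.not_true, Bool.not_false] <;>
    norm_num <;> constructor <;> intro h2 <;> nlinarith

lemma arr_flipinv {n : ℕ} (m : Fin n → Bool) : ∀ ε : Fin n → Bool,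
    (fun i => xor ((fun i => xor (ε i) (m i)) i) (m i)) = ε := by
  intro ε; funext i; simp [Bool.xor_assoc]

lemma arr_oneDsigned {n : ℕ} (α τ : Fin n → F)
    (hα : ∀ i, α i ≠ 0) (hτ : Function.Injective τ) :
    Nat.card {ε : Fin n → Bool //
      ∃ t : F, ∀ i, 0 < (if ε i then (1:F) else -1) * (α i * (t - τ i))} = n + 1 := by
  classical
  have oneD := arr_oneD τ hτ
  set m : Fin n → Bool := fun i => decide (α i < 0) with hm
  have hcond : ∀ (ε : Fin n → Bool) (t : F),
      (∀ i, 0 < (if ε i then (1:F) else -1) * (α i * (t - τ i))) ↔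
      (∀ i, if xor (ε i) (m i) then τ i < t else t < τ i) := by
    intro ε t
    constructor <;> intro h i
    · exact (arr_signIff (ε i) (α i) t (τ i) (hα i)).mp (h i)
    · exact (arr_signIff (ε i) (α i) t (τ i) (hα i)).mpr (h i)
  have key : Function.Bijective
      (fun ε : {ε : Fin n → Bool //
          ∃ t : F, ∀ i, 0 < (if ε i then (1:F) else -1) * (α i * (t - τ i))} =>
        (⟨fun i => xor (ε.1 i) (m i), by
          obtain ⟨t, ht⟩ := ε.2
          exact ⟨t, (hcond ε.1 t).mp ht⟩⟩ :
          {ε : Fin n → Bool // ∃ t : F, ∀ i, if ε i then τ i < t else t < τ i})) := by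
    constructor
    · rintro ⟨ε₁, h₁⟩ ⟨ε₂, h₂⟩ h
      simp only [Subtype.mk.injEq] at h ⊢
      have := congrArg (fun f i => xor (f i) (m i)) h
      simpa [arr_flipinv m] using this
    · rintro ⟨ε', t, ht⟩
      refine ⟨⟨fun i => xor (ε' i) (m i), t, ?_⟩, ?_⟩
      · apply (hcond _ t).mpr
        intro i
        simpa [Bool.xor_assoc] using ht i
      · simp only [Subtype.mk.injEq]
        exact arr_flipinv m ε'
  rw [Nat.card_eq_of_bijective _ key, oneD]

lemma arr_perturb {m : ℕ} (u v : Fin m → F) (hu : ∀ i, 0 < u i) :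
    ∃ δ : F, 0 < δ ∧ ∀ i, 0 < u i + v i * δ ∧ 0 < u i - v i * δ := by
  classical
  set s : Finset F := insert 1 (Finset.univ.image (fun i => u i / (|v i| + 1))) with hs
  have hne : s.Nonempty := ⟨1, Finset.mem_insert_self _ _⟩
  refine ⟨s.min' hne, ?_, ?_⟩
  · rcases Finset.mem_insert.mp (s.min'_mem hne) with h | h
    · rw [h]; exact one_pos
    · obtain ⟨i, -, hi⟩ := Finset.mem_image.mp h
      rw [← hi]
      exact div_pos (hu i) (by positivity)
  · intro i
    have hle : s.min' hne ≤ u i / (|v i| + 1) :=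
      s.min'_le _ (Finset.mem_insert_of_mem (Finset.mem_image_of_mem _ (Finset.mem_univ i)))
    have hpos : 0 < |v i| + 1 := by positivity
    have hkey : |v i| * (s.min' hne) < u i := by
      calc |v i| * (s.min' hne) ≤ |v i| * (u i / (|v i| + 1)) := by
            apply mul_le_mul_of_nonneg_left hle (abs_nonneg _)
        _ < u i := by
            rw [mul_div_assoc']
            rw [div_lt_iff₀ hpos]
            have := hu i
            nlinarith [abs_nonneg (v i)]
    have hminpos : (0:F) ≤ s.min' hne := by
      rcases Finset.mem_insert.mp (s.min'_mem hne) with h | h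
      · rw [h]; exact zero_le_one
      · obtain ⟨j, -, hj⟩ := Finset.mem_image.mp h
        rw [← hj]; exact le_of_lt (div_pos (hu j) (by positivity))
    have h1 : v i * (s.min' hne) ≤ |v i| * (s.min' hne) :=
      mul_le_mul_of_nonneg_right (le_abs_self _) hminpos
    have h2 : -(v i * (s.min' hne)) ≤ |v i| * (s.min' hne) := by
      rw [← neg_mul]
      exact mul_le_mul_of_nonneg_right (neg_le_abs _) hminpos
    constructor <;> linarith

lemma arr_mem_region_snoc {n : ℕ} (a b c : Fin (n+1) → F) (ε' : Fin n → Bool) (s : Bool)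
    (p : F × F) :
    p ∈ arrRegion a b c (Fin.snoc ε' s) ↔
      (p ∈ arrRegion (fun i => a i.castSucc) (fun i => b i.castSucc) (fun i => c i.castSucc) ε'
        ∧ 0 < (if s then (1 : F) else -1) * arrLine a b c (Fin.last n) p) := by
  constructor
  · intro h
    refine ⟨fun i => ?_, ?_⟩
    · have := h i.castSucc
      rwa [Fin.snoc_castSucc] at this
    · have := h (Fin.last n)
      rwa [Fin.snoc_last] at this
  · rintro ⟨h1, h2⟩ i
    refine Fin.lastCases ?_ (fun j => ?_) i
    · rwa [Fin.snoc_last]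
    · rw [Fin.snoc_castSucc]
      exact h1 j

lemma arr_count_meets {n : ℕ} (a b c : Fin (n+1) → F)
    (hnd : ∀ i : Fin (n+1), (a i, b i) ≠ (0, 0))
    (hpar : ∀ i j : Fin (n+1), i ≠ j → a i * b j ≠ a j * b i)
    (hconc : ∀ i j k : Fin (n+1), i ≠ j → j ≠ k → i ≠ k →
      ¬ ∃ p : F × F, arrLine a b c i p = 0 ∧ arrLine a b c j p = 0 ∧ arrLine a b c k p = 0) :
    Nat.card {ε' : Fin n → Bool // ∃ p : F × F,
      p ∈ arrRegion (fun i => a i.castSucc) (fun i => b i.castSucc) (fun i => c i.castSucc) ε'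
        ∧ arrLine a b c (Fin.last n) p = 0} = n + 1 := by
  classical
  set A := a (Fin.last n) with hA
  set B := b (Fin.last n) with hB
  set C := c (Fin.last n) with hC
  have hD : 0 < A^2 + B^2 := by
    rcases lt_trichotomy (A^2 + B^2) 0 with h | h | h
    · nlinarith [sq_nonneg A, sq_nonneg B]
    · have hA0 : A = 0 := by nlinarith [sq_nonneg A, sq_nonneg B]
      have hB0 : B = 0 := by nlinarith [sq_nonneg A, sq_nonneg B]
      exact absurd (by rw [← hA, ← hB, hA0, hB0] : (a (Fin.last n), b (Fin.last n)) = (0,0))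
        (hnd (Fin.last n))
    · exact h
  have hDne : A^2 + B^2 ≠ 0 := ne_of_gt hD
  set p0 : F × F := (A*C/(A^2+B^2), B*C/(A^2+B^2)) with hp0
  set pline : F → F × F := fun t => (p0.1 - B*t, p0.2 + A*t) with hpline
  have honline : ∀ t, arrLine a b c (Fin.last n) (pline t) = 0 := by
    intro t
    simp only [arrLine, hpline, hp0, ← hA, ← hB, ← hC]
    field_simp
    ring
  have hparam : ∀ p : F × F, arrLine a b c (Fin.last n) p = 0 →
      p = pline ((A*p.2 - B*p.1)/(A^2+B^2)) := by
    intro p hp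
    simp only [arrLine, ← hA, ← hB, ← hC] at hp
    have h1 : A * p.1 + B * p.2 = C := by linarith
    simp only [hpline, hp0]
    ext
    · show p.1 = A*C/(A^2+B^2) - B * ((A*p.2 - B*p.1)/(A^2+B^2))
      field_simp
      linear_combination (A : F) * h1
    · show p.2 = B*C/(A^2+B^2) + A * ((A*p.2 - B*p.1)/(A^2+B^2))
      field_simp
      linear_combination (B : F) * h1
  set α : Fin n → F := fun i => A * b i.castSucc - B * a i.castSucc with hαdef
  have hα : ∀ i, α i ≠ 0 := by
    intro i
    have hne : Fin.last n ≠ i.castSucc := (Fin.castSucc_lt_last i).ne'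
    have := hpar (Fin.last n) i.castSucc hne
    rw [← hA, ← hB] at *
    intro h
    apply this
    simp only [hαdef] at h
    linarith
  set β : Fin n → F := fun i => arrLine a b c i.castSucc p0 with hβdef
  set τ : Fin n → F := fun i => -β i / α i with hτdef
  have hline_param : ∀ (i : Fin n) (t : F),
      arrLine a b c i.castSucc (pline t) = α i * (t - τ i) := by
    intro i t
    have hαi : A * b i.castSucc - B * a i.castSucc ≠ 0 := hα i
    simp only [arrLine, hpline, hτdef, hβdef, hαdef, arrLine]
    rw [mul_sub (A * b i.castSucc - B * a i.castSucc), mul_div_assoc' (A * b i.castSucc - B * a i.castSucc),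
      mul_div_right_comm (A * b i.castSucc - B * a i.castSucc), div_self hαi, one_mul]
    ring
  have hτinj : Function.Injective τ := by
    intro i j hij
    by_contra hne
    have hne' : i.castSucc ≠ j.castSucc := fun h => hne (Fin.castSucc_injective n h)
    apply hconc i.castSucc j.castSucc (Fin.last n) hne' (Fin.castSucc_lt_last j).ne
      (Fin.castSucc_lt_last i).ne
    refine ⟨pline (τ i), ?_, ?_, honline _⟩
    · rw [hline_param]; ring
    · rw [hline_param, hij]; ring
  have hiff : ∀ ε' : Fin n → Bool,
      (∃ p : F × F, p ∈ arrRegion (fun i => a i.castSucc) (fun i => b i.castSucc)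
          (fun i => c i.castSucc) ε' ∧ arrLine a b c (Fin.last n) p = 0) ↔
      (∃ t : F, ∀ i, 0 < (if ε' i then (1:F) else -1) * (α i * (t - τ i))) := by
    intro ε'
    constructor
    · rintro ⟨p, hp, h0⟩
      refine ⟨(A*p.2 - B*p.1)/(A^2+B^2), fun i => ?_⟩
      rw [← hline_param, ← hparam p h0]
      exact hp i
    · rintro ⟨t, ht⟩
      refine ⟨pline t, fun i => ?_, honline t⟩
      show 0 < (if ε' i then (1:F) else -1) * arrLine a b c i.castSucc (pline t)
      rw [hline_param]
      exact ht i
  have key : Nat.card {ε' : Fin n → Bool // ∃ p : F × F,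
      p ∈ arrRegion (fun i => a i.castSucc) (fun i => b i.castSucc) (fun i => c i.castSucc) ε'
        ∧ arrLine a b c (Fin.last n) p = 0} =
      Nat.card {ε : Fin n → Bool //
        ∃ t : F, ∀ i, 0 < (if ε i then (1:F) else -1) * (α i * (t - τ i))} :=
    Nat.card_eq_of_bijective (fun x => ⟨x.1, (hiff x.1).mp x.2⟩)
      ⟨fun x y h => by
        cases x; cases y; simpa using h,
       fun y => ⟨⟨y.1, (hiff y.1).mpr y.2⟩, Subtype.ext rfl⟩⟩
  rw [key]
  exact arr_oneDsigned α τ hα hτinj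

lemma arr_ext_both {n : ℕ} (a b c : Fin (n+1) → F)
    (hD : 0 < a (Fin.last n)^2 + b (Fin.last n)^2) (ε' : Fin n → Bool)
    (h : ∃ p : F × F,
      p ∈ arrRegion (fun i => a i.castSucc) (fun i => b i.castSucc) (fun i => c i.castSucc) ε'
        ∧ arrLine a b c (Fin.last n) p = 0) :
    (arrRegion a b c (Fin.snoc ε' true)).Nonempty ∧
      (arrRegion a b c (Fin.snoc ε' false)).Nonempty := by
  obtain ⟨p, hp, h0⟩ := h
  set A := a (Fin.last n) with hA
  set B := b (Fin.last n) with hB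
  obtain ⟨δ, hδ, hδall⟩ := arr_perturb
    (fun i => (if ε' i then (1:F) else -1) * arrLine a b c i.castSucc p)
    (fun i => (if ε' i then (1:F) else -1) * (a i.castSucc * A + b i.castSucc * B))
    (fun i => hp i)
  constructor
  · refine ⟨(p.1 + A*δ, p.2 + B*δ), (arr_mem_region_snoc _ _ _ _ _ _).mpr ⟨fun i => ?_, ?_⟩⟩
    · have key : arrLine a b c i.castSucc (p.1 + A*δ, p.2 + B*δ)
          = arrLine a b c i.castSucc p + (a i.castSucc * A + b i.castSucc * B) * δ := by
        simp only [arrLine]; ring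
      have h2 := (hδall i).1
      have h3 : (if ε' i then (1:F) else -1) *
            (arrLine a b c i.castSucc p + (a i.castSucc * A + b i.castSucc * B) * δ)
          = (if ε' i then (1:F) else -1) * arrLine a b c i.castSucc p +
            ((if ε' i then (1:F) else -1) * (a i.castSucc * A + b i.castSucc * B)) * δ := by
        ring
      show 0 < (if ε' i then (1:F) else -1) * arrLine a b c i.castSucc (p.1 + A*δ, p.2 + B*δ)
      rw [key, h3]
      exact h2
    · have key2 : arrLine a b c (Fin.last n) (p.1 + A*δ, p.2 + B*δ)
          = arrLine a b c (Fin.last n) p + (A^2+B^2)*δ := by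
        simp only [arrLine, ← hA, ← hB]; ring
      rw [key2, h0, zero_add, if_pos rfl, one_mul]
      exact mul_pos hD hδ
  · refine ⟨(p.1 - A*δ, p.2 - B*δ), (arr_mem_region_snoc _ _ _ _ _ _).mpr ⟨fun i => ?_, ?_⟩⟩
    · have key : arrLine a b c i.castSucc (p.1 - A*δ, p.2 - B*δ)
          = arrLine a b c i.castSucc p - (a i.castSucc * A + b i.castSucc * B) * δ := by
        simp only [arrLine]; ring
      have h2 := (hδall i).2
      have h3 : (if ε' i then (1:F) else -1) *
            (arrLine a b c i.castSucc p - (a i.castSucc * A + b i.castSucc * B) * δ)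
          = (if ε' i then (1:F) else -1) * arrLine a b c i.castSucc p -
            ((if ε' i then (1:F) else -1) * (a i.castSucc * A + b i.castSucc * B)) * δ := by
        ring
      show 0 < (if ε' i then (1:F) else -1) * arrLine a b c i.castSucc (p.1 - A*δ, p.2 - B*δ)
      rw [key, h3]
      exact h2
    · have key2 : arrLine a b c (Fin.last n) (p.1 - A*δ, p.2 - B*δ)
          = arrLine a b c (Fin.last n) p - (A^2+B^2)*δ := by
        simp only [arrLine, ← hA, ← hB]; ring
      rw [key2, h0, zero_sub, if_neg (by simp), neg_mul, one_mul, neg_neg]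
      exact mul_pos hD hδ

lemma arr_ext_meets_of_both {n : ℕ} (a b c : Fin (n+1) → F)
    (ε' : Fin n → Bool)
    (h1 : (arrRegion a b c (Fin.snoc ε' true)).Nonempty)
    (h2 : (arrRegion a b c (Fin.snoc ε' false)).Nonempty) :
    ∃ p : F × F,
      p ∈ arrRegion (fun i => a i.castSucc) (fun i => b i.castSucc) (fun i => c i.castSucc) ε'
        ∧ arrLine a b c (Fin.last n) p = 0 := by
  obtain ⟨q, hq⟩ := h1
  obtain ⟨p, hp⟩ := h2
  rw [arr_mem_region_snoc] at hq hp
  have hLq : 0 < arrLine a b c (Fin.last n) q := by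
    have := hq.2; rwa [if_pos rfl, one_mul] at this
  have hLp : arrLine a b c (Fin.last n) p < 0 := by
    have := hp.2; rw [if_neg (by simp), neg_mul, one_mul] at this; linarith
  have hden : arrLine a b c (Fin.last n) q - arrLine a b c (Fin.last n) p ≠ 0 := by linarith
  have hkey : ∃ t : F, 0 < t ∧ t < 1 ∧
      (1-t) * (arrLine a b c (Fin.last n) p) + t * (arrLine a b c (Fin.last n) q) = 0 := by
    refine ⟨-(arrLine a b c (Fin.last n) p) /
        (arrLine a b c (Fin.last n) q - arrLine a b c (Fin.last n) p),
      div_pos (by linarith) (by linarith), ?_, ?_⟩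
    · rw [div_lt_one (by linarith)]; linarith
    · field_simp
      ring
  obtain ⟨t, ht0, ht1, hzero⟩ := hkey
  refine ⟨((1-t)*p.1 + t*q.1, (1-t)*p.2 + t*q.2), fun i => ?_, ?_⟩
  · have key : arrLine a b c i.castSucc ((1-t)*p.1 + t*q.1, (1-t)*p.2 + t*q.2)
        = (1-t) * arrLine a b c i.castSucc p + t * arrLine a b c i.castSucc q := by
      simp only [arrLine]; ring
    show 0 < (if ε' i then (1:F) else -1) *
      arrLine a b c i.castSucc ((1-t)*p.1 + t*q.1, (1-t)*p.2 + t*q.2)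
    rw [key]
    have hpi := hp.1 i
    have hqi := hq.1 i
    have hpi' : 0 < (if ε' i then (1:F) else -1) * arrLine a b c i.castSucc p := hpi
    have hqi' : 0 < (if ε' i then (1:F) else -1) * arrLine a b c i.castSucc q := hqi
    have h3 : (if ε' i then (1:F) else -1) *
          ((1-t) * arrLine a b c i.castSucc p + t * arrLine a b c i.castSucc q)
        = (1-t) * ((if ε' i then (1:F) else -1) * arrLine a b c i.castSucc p)
          + t * ((if ε' i then (1:F) else -1) * arrLine a b c i.castSucc q) := by ring
    rw [h3]
    have := mul_pos (by linarith : (0:F) < 1 - t) hpi'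
    have := mul_pos ht0 hqi'
    linarith
  · have key : arrLine a b c (Fin.last n) ((1-t)*p.1 + t*q.1, (1-t)*p.2 + t*q.2)
        = (1-t) * arrLine a b c (Fin.last n) p + t * arrLine a b c (Fin.last n) q := by
      simp only [arrLine]; ring
    rw [key, hzero]

end aux

/-- Count of the number of regions: a line arrangement of `n` lines in the plane over a
linearly ordered field (no two parallel, no three concurrent) has exactly
`n(n+1)/2 + 1 = C(n+1, 2) + 1` regions. -/
theorem count_regions_of_line_arrangement
    {F : Type*} [Field F] [LinearOrder F] [IsStrictOrderedRing F] (n : ℕ)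
    (a b c : Fin n → F)
    (hnd : ∀ i : Fin n, (a i, b i) ≠ (0, 0))
    (hpar : ∀ i j : Fin n, i ≠ j → a i * b j ≠ a j * b i)
    (hconc : ∀ i j k : Fin n, i ≠ j → j ≠ k → i ≠ k →
      ¬ ∃ p : F × F, arrLine a b c i p = 0 ∧ arrLine a b c j p = 0 ∧ arrLine a b c k p = 0) :
    Nat.card {ε : Fin n → Bool // (arrRegion a b c ε).Nonempty} = n * (n + 1) / 2 + 1 := by
  classical
  induction n with
  | zero =>
    have h1 : Nat.card {ε : Fin 0 → Bool // (arrRegion a b c ε).Nonempty} = 1 := by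
      rw [Nat.card_eq_one_iff_unique]
      refine ⟨⟨?_⟩, ⟨⟨fun _ => true, ⟨(0,0), fun i => i.elim0⟩⟩⟩⟩
      rintro ⟨ε₁, -⟩ ⟨ε₂, -⟩
      apply Subtype.ext
      funext i
      exact i.elim0
    rw [h1]
  | succ n IH =>
    have hnd' : ∀ i : Fin n,
        ((fun i : Fin n => a i.castSucc) i, (fun i : Fin n => b i.castSucc) i) ≠ (0,0) :=
      fun i => hnd i.castSucc
    have hpar' : ∀ i j : Fin n, i ≠ j →
        (fun i : Fin n => a i.castSucc) i * (fun i : Fin n => b i.castSucc) j ≠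
        (fun i : Fin n => a i.castSucc) j * (fun i : Fin n => b i.castSucc) i :=
      fun i j hij => hpar _ _ (fun h => hij (Fin.castSucc_injective n h))
    have hconc' : ∀ i j k : Fin n, i ≠ j → j ≠ k → i ≠ k →
        ¬ ∃ p : F × F,
          arrLine (fun i : Fin n => a i.castSucc) (fun i : Fin n => b i.castSucc)
            (fun i : Fin n => c i.castSucc) i p = 0 ∧
          arrLine (fun i : Fin n => a i.castSucc) (fun i : Fin n => b i.castSucc)
            (fun i : Fin n => c i.castSucc) j p = 0 ∧
          arrLine (fun i : Fin n => a i.castSucc) (fun i : Fin n => b i.castSucc)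
            (fun i : Fin n => c i.castSucc) k p = 0 :=
      fun i j k hij hjk hik =>
        hconc i.castSucc j.castSucc k.castSucc
          (fun h => hij (Fin.castSucc_injective n h))
          (fun h => hjk (Fin.castSucc_injective n h))
          (fun h => hik (Fin.castSucc_injective n h))
    have IH' := IH (fun i => a i.castSucc) (fun i => b i.castSucc) (fun i => c i.castSucc)
      hnd' hpar' hconc'
    have hD : 0 < a (Fin.last n)^2 + b (Fin.last n)^2 := by
      rcases lt_trichotomy (a (Fin.last n)^2 + b (Fin.last n)^2) 0 with h | h | h
      · nlinarith [sq_nonneg (a (Fin.last n)), sq_nonneg (b (Fin.last n))]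
      · have hA0 : a (Fin.last n) = 0 := by
          nlinarith [sq_nonneg (a (Fin.last n)), sq_nonneg (b (Fin.last n))]
        have hB0 : b (Fin.last n) = 0 := by
          nlinarith [sq_nonneg (a (Fin.last n)), sq_nonneg (b (Fin.last n))]
        exact absurd (by rw [hA0, hB0] : (a (Fin.last n), b (Fin.last n)) = (0,0))
          (hnd (Fin.last n))
      · exact h
    -- finite sets
    set meets : (Fin n → Bool) → Prop := fun ε' => ∃ p : F × F,
      p ∈ arrRegion (fun i => a i.castSucc) (fun i => b i.castSucc) (fun i => c i.castSucc) ε'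
        ∧ arrLine a b c (Fin.last n) p = 0 with hmeets
    set S : Finset (Fin (n+1) → Bool) :=
      Finset.univ.filter (fun ε => (arrRegion a b c ε).Nonempty) with hS
    set S' : Finset (Fin n → Bool) :=
      Finset.univ.filter (fun ε' => (arrRegion (fun i => a i.castSucc) (fun i => b i.castSucc)
        (fun i => c i.castSucc) ε').Nonempty) with hS'
    have hrestrict : ∀ ε ∈ S, ε ∘ Fin.castSucc ∈ S' := by
      intro ε hε
      simp only [hS, Finset.mem_filter, Finset.mem_univ, true_and] at hε
      simp only [hS', Finset.mem_filter, Finset.mem_univ, true_and]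
      obtain ⟨p, hp⟩ := hε
      exact ⟨p, fun i => hp i.castSucc⟩
    have hsum := Finset.card_eq_sum_card_fiberwise hrestrict
    have hfiber : ∀ ε' ∈ S',
        (S.filter (fun ε => ε ∘ Fin.castSucc = ε')).card = if meets ε' then 2 else 1 := by
      intro ε' hε'
      have hne' : (arrRegion (fun i => a i.castSucc) (fun i => b i.castSucc)
          (fun i => c i.castSucc) ε').Nonempty := by
        simpa only [hS', Finset.mem_filter, Finset.mem_univ, true_and] using hε'
      have hdecomp : ∀ ε : Fin (n+1) → Bool, ε ∘ Fin.castSucc = ε' →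
          ε = Fin.snoc ε' (ε (Fin.last n)) := by
        intro ε h
        have hinit : Fin.init ε = ε' := h
        rw [← hinit]
        exact (Fin.snoc_init_self ε).symm
      by_cases hm : meets ε'
      · rw [if_pos hm]
        have hboth := arr_ext_both a b c hD ε' hm
        have hfe : S.filter (fun ε => ε ∘ Fin.castSucc = ε')
            = {Fin.snoc ε' true, Fin.snoc ε' false} := by
          ext ε
          simp only [Finset.mem_filter, Finset.mem_insert, Finset.mem_singleton, hS,
            Finset.mem_univ, true_and]
          constructor
          · rintro ⟨hPε, hrest⟩
            have hd := hdecomp ε hrest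
            rcases Bool.eq_false_or_eq_true (ε (Fin.last n)) with h | h
            · left; rw [hd, h]
            · right; rw [hd, h]
          · rintro (rfl | rfl)
            · exact ⟨hboth.1, by funext i; simp⟩
            · exact ⟨hboth.2, by funext i; simp⟩
        rw [hfe, Finset.card_insert_of_notMem, Finset.card_singleton]
        intro hcon
        rw [Finset.mem_singleton] at hcon
        have := congrFun hcon (Fin.last n)
        rw [Fin.snoc_last, Fin.snoc_last] at this
        exact Bool.noConfusion this
      · rw [if_neg hm]
        have hone : ∃ s : Bool, (arrRegion a b c (Fin.snoc ε' s)).Nonempty ∧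
            ¬ (arrRegion a b c (Fin.snoc ε' (!s))).Nonempty := by
          obtain ⟨p, hp⟩ := hne'
          rcases lt_trichotomy (arrLine a b c (Fin.last n) p) 0 with h | h | h
          · refine ⟨false, ⟨p, (arr_mem_region_snoc _ _ _ _ _ _).mpr
              ⟨hp, by rw [if_neg (by simp), neg_mul, one_mul]; linarith⟩⟩, fun hc => ?_⟩
            exact hm (arr_ext_meets_of_both a b c ε' (by simpa using hc)
              ⟨p, (arr_mem_region_snoc _ _ _ _ _ _).mpr
                ⟨hp, by rw [if_neg (by simp), neg_mul, one_mul]; linarith⟩⟩)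
          · exact absurd ⟨p, hp, h⟩ hm
          · refine ⟨true, ⟨p, (arr_mem_region_snoc _ _ _ _ _ _).mpr
              ⟨hp, by rw [if_pos rfl, one_mul]; exact h⟩⟩, fun hc => ?_⟩
            exact hm (arr_ext_meets_of_both a b c ε'
              ⟨p, (arr_mem_region_snoc _ _ _ _ _ _).mpr
                ⟨hp, by rw [if_pos rfl, one_mul]; exact h⟩⟩ (by simpa using hc))
        obtain ⟨s, hs1, hs2⟩ := hone
        have hfe : S.filter (fun ε => ε ∘ Fin.castSucc = ε') = {Fin.snoc ε' s} := by
          ext ε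
          simp only [Finset.mem_filter, Finset.mem_singleton, hS, Finset.mem_univ, true_and]
          constructor
          · rintro ⟨hPε, hrest⟩
            have hd := hdecomp ε hrest
            have hcases : ε (Fin.last n) = s ∨ ε (Fin.last n) = !s := by
              cases s <;> rcases Bool.eq_false_or_eq_true (ε (Fin.last n)) with h | h <;>
                simp [h]
            rcases hcases with h | h
            · rw [hd, h]
            · exfalso
              apply hs2
              rw [hd, h] at hPε
              exact hPε
          · rintro rfl
            exact ⟨hs1, by funext i; simp⟩
        rw [hfe, Finset.card_singleton]
    have hScard : S.card = S'.card + (S'.filter meets).card := by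
      rw [hsum]
      rw [Finset.sum_congr rfl hfiber]
      have hsplit : ∀ ε' ∈ S', (if meets ε' then 2 else 1) = 1 + (if meets ε' then 1 else 0) := by
        intro ε' _
        by_cases h : meets ε' <;> simp [h]
      rw [Finset.sum_congr rfl hsplit, Finset.sum_add_distrib, Finset.sum_const, smul_eq_mul,
        mul_one, ← Finset.card_filter]
    have hMeq : S'.filter meets = Finset.univ.filter meets := by
      ext ε'
      simp only [Finset.mem_filter, Finset.mem_univ, true_and, hS']
      constructor
      · rintro ⟨-, h⟩; exact h
      · intro h
        obtain ⟨p, hp, hl⟩ := h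
        exact ⟨⟨p, hp⟩, p, hp, hl⟩
    have hMcard : (Finset.univ.filter meets).card = n + 1 := by
      have := arr_count_meets a b c hnd hpar hconc
      rw [Nat.card_eq_fintype_card, Fintype.card_subtype] at this
      exact this
    have hS'card : S'.card = n * (n + 1) / 2 + 1 := by
      rw [Nat.card_eq_fintype_card, Fintype.card_subtype] at IH'
      exact IH'
    have hgoal : Nat.card {ε : Fin (n+1) → Bool // (arrRegion a b c ε).Nonempty} = S.card := by
      rw [Nat.card_eq_fintype_card, Fintype.card_subtype]
    rw [hgoal, hScard, hMeq, hMcard, hS'card]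
    have harith : ∀ m k : ℕ, k = m + 2*(n+1) → m/2 + 1 + (n+1) = k/2 + 1 := by
      intro m k h; omega
    have := harith (n*(n+1)) ((n+1)*(n+1+1)) (by ring)
    omega
end

section
/- Let F be a linearly ordered field and let L_1, …, L_n be a line arrangement in F² with n ≥ 1. Then the number of unbounded regions of the arrangement equals 2n. -/
/-- A subset of the plane is unbounded if it contains a ray. -/
def arrUnbounded {F : Type*} [Field F] [LinearOrder F] [IsStrictOrderedRing F] (R : Set (F × F)) : Prop :=
  ∃ v w : F × F, w ≠ 0 ∧ ∀ t : F, 0 ≤ t → v + t • w ∈ R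

section Aux
variable {F : Type*} [Field F] [LinearOrder F] [IsStrictOrderedRing F] {n : ℕ}

def DownP (m : Fin n → F) (τ : Fin n → Bool) : Prop :=
  ∀ i j, m i < m j → τ j = true → τ i = true

def UpP (m : Fin n → F) (τ : Fin n → Bool) : Prop :=
  ∀ i j, m i < m j → τ i = true → τ j = true

lemma card_filter_lt_fin (n k : ℕ) (hk : k ≤ n) :
    (Finset.univ.filter (fun v : Fin n => (v : ℕ) < k)).card = k := by
  have h : (Finset.univ.filter (fun v : Fin n => (v : ℕ) < k)).card = (Finset.range k).card := by
    refine Finset.card_bij (fun (v : Fin n) (_ : v ∈ Finset.univ.filter (fun v : Fin n => (v : ℕ) < k)) => (v : ℕ)) ?_ ?_ ?_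
    · intro v hv
      simp only [Finset.mem_filter, Finset.mem_univ, true_and] at hv
      simpa using hv
    · intro v₁ _ v₂ _ h; exact Fin.ext h
    · intro j hj
      simp only [Finset.mem_range] at hj
      exact ⟨⟨j, lt_of_lt_of_le hj hk⟩, by simp [hj], rfl⟩
  simpa using h

attribute [local instance] Classical.propDecidable

lemma card_down {m : Fin n → F} (hm : Function.Injective m) :
    (Finset.univ.filter (fun τ : Fin n → Bool => DownP m τ)).card = n + 1 := by
  classical
  set r : Fin n → ℕ := fun i => (Finset.univ.filter (fun j => m j < m i)).card with hr
  have hrmono : ∀ i j, m i < m j → r i < r j := by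
    intro i j hij
    apply Finset.card_lt_card
    constructor
    · intro x hx
      simp only [Finset.mem_filter, Finset.mem_univ, true_and] at hx ⊢
      exact hx.trans hij
    · intro hsub
      have hmem : i ∈ Finset.univ.filter (fun x => m x < m j) := by simp [hij]
      have := hsub hmem
      simp at this
  have hrinj : Function.Injective r := by
    intro i j h
    by_contra hne
    rcases (hm.ne hne).lt_or_gt with hlt | hlt
    · exact absurd h (hrmono _ _ hlt).ne
    · exact absurd h.symm (hrmono _ _ hlt).ne
  have hrlt : ∀ i, r i < n := by
    intro i
    have hsub : Finset.univ.filter (fun j => m j < m i) ⊆ Finset.univ.erase i := by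
      intro x hx
      simp only [Finset.mem_filter, Finset.mem_univ, true_and] at hx
      simp only [Finset.mem_erase, Finset.mem_univ, and_true]
      rintro rfl; exact lt_irrefl _ hx
    calc r i ≤ (Finset.univ.erase i).card := Finset.card_le_card hsub
      _ < Finset.univ.card := Finset.card_erase_lt_of_mem (Finset.mem_univ i)
      _ = n := by simp
  set R : Fin n → Fin n := fun i => ⟨r i, hrlt i⟩ with hR
  have hRbij : Function.Bijective R := by
    apply Finite.injective_iff_bijective.mp
    intro i j h
    exact hrinj (congrArg Fin.val h)
  have hcard_rk : ∀ k ≤ n, (Finset.univ.filter (fun i => r i < k)).card = k := by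
    intro k hk
    have h : (Finset.univ.filter (fun i => r i < k)).card =
        (Finset.univ.filter (fun v : Fin n => (v : ℕ) < k)).card := by
      refine Finset.card_bij (fun (i : Fin n) (_ : i ∈ Finset.univ.filter (fun i => r i < k)) => R i) ?_ ?_ ?_
      · intro i hi
        simp only [Finset.mem_filter, Finset.mem_univ, true_and] at hi ⊢
        exact hi
      · intro i _ j _ h; exact hRbij.1 h
      · intro v hv
        obtain ⟨i, rfl⟩ := hRbij.2 v
        simp only [Finset.mem_filter, Finset.mem_univ, true_and] at hv ⊢
        exact ⟨i, hv, rfl⟩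
    rw [h, card_filter_lt_fin n k hk]
  have hdet : ∀ τ₁ τ₂ : Fin n → Bool, DownP m τ₁ → DownP m τ₂ →
      (Finset.univ.filter (fun i => τ₁ i = true)).card =
      (Finset.univ.filter (fun i => τ₂ i = true)).card → τ₁ = τ₂ := by
    intro τ₁ τ₂ h1 h2 hc
    by_contra hne
    set T₁ := Finset.univ.filter (fun i => τ₁ i = true) with hT1
    set T₂ := Finset.univ.filter (fun i => τ₂ i = true) with hT2
    have hTne : T₁ ≠ T₂ := by
      intro hT
      apply hne
      funext i
      have : (i ∈ T₁) ↔ (i ∈ T₂) := by rw [hT]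
      simp only [hT1, hT2, Finset.mem_filter, Finset.mem_univ, true_and] at this
      cases h1i : τ₁ i <;> cases h2i : τ₂ i <;> simp [h1i, h2i] at this ⊢
    -- get i ∈ T₁ \ T₂ or j ∈ T₂ \ T₁; then the other by card
    have hdiff : (∃ i, i ∈ T₁ ∧ i ∉ T₂) ∨ (∃ j, j ∈ T₂ ∧ j ∉ T₁) := by
      by_contra hcon
      push_neg at hcon
      exact hTne (Finset.Subset.antisymm (fun x hx => hcon.1 x hx) (fun x hx => hcon.2 x hx))
    have key : ∀ (σ₁ σ₂ : Fin n → Bool), DownP m σ₁ → DownP m σ₂ →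
        (Finset.univ.filter (fun i => σ₁ i = true)).card =
        (Finset.univ.filter (fun i => σ₂ i = true)).card →
        ∀ i, σ₁ i = true → σ₂ i = false → False := by
      intro σ₁ σ₂ hs1 hs2 hsc i hi1 hi2
      -- T₂' ⊆ T₁' would give equality; so there is j ∈ T₂' \ T₁'
      have : ¬ (Finset.univ.filter (fun x => σ₂ x = true) ⊆
          Finset.univ.filter (fun x => σ₁ x = true)) := by
        intro hsub
        have := Finset.eq_of_subset_of_card_le hsub (le_of_eq hsc)
        have hiT : i ∈ Finset.univ.filter (fun x => σ₁ x = true) := by simp [hi1]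
        rw [← this] at hiT
        simp [hi2] at hiT
      obtain ⟨j, hj⟩ := Finset.not_subset.mp this
      simp only [Finset.mem_filter, Finset.mem_univ, true_and, Bool.not_eq_true] at hj
      obtain ⟨hj2, hj1⟩ := hj
      rcases lt_trichotomy (m i) (m j) with h | h | h
      · have := hs2 i j h hj2; simp [hi2] at this
      · have := hm h; subst this; simp [hj2] at hi2
      · have := hs1 j i h hi1; simp [hj1] at this
    rcases hdiff with ⟨i, hi1, hi2⟩ | ⟨j, hj2, hj1⟩
    · simp only [hT1, hT2, Finset.mem_filter, Finset.mem_univ, true_and,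
        Bool.not_eq_true] at hi1 hi2
      exact key τ₁ τ₂ h1 h2 hc i hi1 hi2
    · simp only [hT1, hT2, Finset.mem_filter, Finset.mem_univ, true_and,
        Bool.not_eq_true] at hj1 hj2
      exact key τ₂ τ₁ h2 h1 hc.symm j hj2 hj1
  rw [← Finset.card_range (n + 1)]
  refine Finset.card_bij (fun (τ : Fin n → Bool) (_ : τ ∈ Finset.univ.filter (fun τ : Fin n → Bool => DownP m τ)) => (Finset.univ.filter (fun i => τ i = true)).card) ?_ ?_ ?_
  · intro τ _
    simp only [Finset.mem_range]
    have := Finset.card_filter_le Finset.univ (fun i : Fin n => τ i = true)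
    simp only [Finset.card_univ, Fintype.card_fin] at this
    omega
  · intro τ₁ h₁ τ₂ h₂ h
    simp only [Finset.mem_filter, Finset.mem_univ, true_and] at h₁ h₂
    exact hdet τ₁ τ₂ h₁ h₂ h
  · intro k hk
    simp only [Finset.mem_range] at hk
    have hk' : k ≤ n := by omega
    refine ⟨fun i => decide (r i < k), ?_, ?_⟩
    · simp only [Finset.mem_filter, Finset.mem_univ, true_and]
      intro i j hij hj
      simp only [decide_eq_true_eq] at hj ⊢
      exact lt_trans (hrmono i j hij) hj
    · simpa using hcard_rk k hk'


lemma up_iff_down_neg (m : Fin n → F) (τ : Fin n → Bool) :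
    UpP m τ ↔ DownP (fun i => -m i) τ := by
  constructor
  · intro h i j hij hj
    exact h j i (by simpa using hij) hj
  · intro h i j hij hi
    exact h j i (by simpa using hij) hi

lemma card_up {m : Fin n → F} (hm : Function.Injective m) :
    (Finset.univ.filter (fun τ : Fin n → Bool => UpP m τ)).card = n + 1 := by
  have h : (Finset.univ.filter (fun τ : Fin n → Bool => UpP m τ)) =
      (Finset.univ.filter (fun τ : Fin n → Bool => DownP (fun i => -m i) τ)) := by
    apply Finset.filter_congr
    intro τ _
    exact up_iff_down_neg m τ
  rw [h]
  exact card_down (fun i j hij => hm (neg_injective hij))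

lemma inter_eq_pair (hn : 1 ≤ n) {m : Fin n → F} (hm : Function.Injective m) :
    Finset.univ.filter (fun τ : Fin n → Bool => DownP m τ ∧ UpP m τ) =
      {fun _ => true, fun _ => false} := by
  ext τ
  simp only [Finset.mem_filter, Finset.mem_univ, true_and, Finset.mem_insert,
    Finset.mem_singleton]
  constructor
  · rintro ⟨hd, hu⟩
    have key : ∀ i j, τ i = true → τ j = true := by
      intro i j hi
      rcases lt_trichotomy (m i) (m j) with h | h | h
      · exact hu i j h hi
      · exact (hm h) ▸ hi
      · exact hd j i h hi
    set i0 : Fin n := ⟨0, hn⟩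
    cases hti : τ i0
    · right
      funext j
      cases htj : τ j
      · rfl
      · have := key j i0 htj
        rw [hti] at this
        exact this.symm
    · left
      funext j
      exact key i0 j hti
  · rintro (rfl | rfl)
    · exact ⟨fun i j _ _ => rfl, fun i j _ _ => rfl⟩
    · exact ⟨fun i j _ h => h, fun i j _ h => h⟩

lemma count_downup (hn : 1 ≤ n) {m : Fin n → F} (hm : Function.Injective m) :
    Nat.card {τ : Fin n → Bool // DownP m τ ∨ UpP m τ} = 2 * n := by
  rw [Nat.card_eq_fintype_card, Fintype.card_subtype]
  have h1 : Finset.univ.filter (fun τ : Fin n → Bool => DownP m τ ∨ UpP m τ) =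
      Finset.univ.filter (fun τ : Fin n → Bool => DownP m τ) ∪
      Finset.univ.filter (fun τ : Fin n → Bool => UpP m τ) :=
    Finset.filter_or _ _ _
  have h2 : Finset.univ.filter (fun τ : Fin n → Bool => DownP m τ) ∩
      Finset.univ.filter (fun τ : Fin n → Bool => UpP m τ) =
      Finset.univ.filter (fun τ : Fin n → Bool => DownP m τ ∧ UpP m τ) :=
    (Finset.filter_and _ _ _).symm
  have h3 := Finset.card_union_add_card_inter
    (Finset.univ.filter (fun τ : Fin n → Bool => DownP m τ))
    (Finset.univ.filter (fun τ : Fin n → Bool => UpP m τ))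
  rw [h2, inter_eq_pair hn hm, card_down hm, card_up hm] at h3
  have h4 : ({fun _ => true, fun _ => false} : Finset (Fin n → Bool)).card = 2 := by
    rw [Finset.card_insert_of_notMem, Finset.card_singleton]
    simp only [Finset.mem_singleton]
    intro h
    have := congrFun h ⟨0, hn⟩
    simp at this
  rw [h4] at h3
  rw [h1]
  omega

variable {F : Type*} [Field F] [LinearOrder F] [IsStrictOrderedRing F] {n : ℕ}

lemma sign_transfer_lt (e q : Bool) (B X : F) (hB : B ≠ 0) (hq : q = true ↔ 0 < B) :
    ((0:F) < (if e then (1:F) else -1) * (B * X) ↔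
      0 < (if (e == q) then (1:F) else -1) * X) := by
  rcases hB.lt_or_gt with h | h
  · have hq' : q = false := by
      cases q
      · rfl
      · exact absurd (hq.mp rfl) (not_lt.mpr h.le)
    subst hq'
    cases e <;> simp <;> constructor <;> intro h2 <;> nlinarith
  · have hq' : q = true := hq.mpr h
    subst hq'
    cases e <;> simp <;> constructor <;> intro h2 <;> nlinarith

lemma sign_transfer_le (e q : Bool) (B X : F) (hB : B ≠ 0) (hq : q = true ↔ 0 < B) :
    ((0:F) ≤ (if e then (1:F) else -1) * (B * X) ↔
      0 ≤ (if (e == q) then (1:F) else -1) * X) := by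
  rcases hB.lt_or_gt with h | h
  · have hq' : q = false := by
      cases q
      · rfl
      · exact absurd (hq.mp rfl) (not_lt.mpr h.le)
    subst hq'
    cases e <;> simp <;> constructor <;> intro h2 <;> nlinarith
  · have hq' : q = true := hq.mpr h
    subst hq'
    cases e <;> simp <;> constructor <;> intro h2 <;> nlinarith

-- strict directional realizability implies the region is nonempty and unbounded
lemma strict_to_P (hn : 1 ≤ n) (a b c : Fin n → F) (ε : Fin n → Bool)
    (h : ∃ w : F × F, ∀ i, 0 < (if ε i then (1:F) else -1) * (a i * w.1 + b i * w.2)) :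
    (arrRegion a b c ε).Nonempty ∧ arrUnbounded (arrRegion a b c ε) := by
  obtain ⟨w, hw⟩ := h
  have hw0 : w ≠ 0 := by
    rintro rfl
    have := hw ⟨0, hn⟩
    simp at this
  classical
  obtain ⟨T, hT⟩ := Finset.exists_le (Finset.univ.image (fun i : Fin n =>
    ((if ε i then (1:F) else -1) * c i + 1) /
      ((if ε i then (1:F) else -1) * (a i * w.1 + b i * w.2))))
  have hTc : ∀ i : Fin n, (if ε i then (1:F) else -1) * c i <
      T * ((if ε i then (1:F) else -1) * (a i * w.1 + b i * w.2)) := by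
    intro i
    set s : F := if ε i then (1:F) else -1 with hs
    set L : F := a i * w.1 + b i * w.2 with hL
    have hq : (s * c i + 1) / (s * L) ≤ T := hT _ (Finset.mem_image_of_mem _ (Finset.mem_univ i))
    have hpos : 0 < s * L := hw i
    have := (div_le_iff₀ hpos).mp hq
    nlinarith
  have hray : ∀ t : F, 0 ≤ t → T • w + t • w ∈ arrRegion a b c ε := by
    intro t ht
    intro i
    set s : F := if ε i then (1:F) else -1 with hs
    set L : F := a i * w.1 + b i * w.2 with hL
    have hpos : 0 < s * L := hw i
    have hTi : s * c i < T * (s * L) := hTc i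
    have hexp : s * arrLine a b c i (T • w + t • w) = T * (s * L) + t * (s * L) - s * c i := by
      simp only [arrLine, Prod.fst_add, Prod.snd_add, Prod.smul_fst, Prod.smul_snd,
        smul_eq_mul, hL, hs]
      ring
    show 0 < s * arrLine a b c i (T • w + t • w)
    rw [hexp]
    nlinarith [mul_nonneg ht hpos.le]
  constructor
  · exact ⟨T • w, by simpa using hray 0 le_rfl⟩
  · exact ⟨T • w, w, hw0, hray⟩

-- unboundedness gives a weak direction vector
lemma P_to_weak (a b c : Fin n → F) (ε : Fin n → Bool)
    (h : arrUnbounded (arrRegion a b c ε)) :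
    ∃ w : F × F, w ≠ 0 ∧
      ∀ i, 0 ≤ (if ε i then (1:F) else -1) * (a i * w.1 + b i * w.2) := by
  obtain ⟨v, w, hw0, hray⟩ := h
  refine ⟨w, hw0, fun i => ?_⟩
  by_contra hneg
  push_neg at hneg
  set s : F := if ε i then (1:F) else -1 with hs
  set L : F := a i * w.1 + b i * w.2 with hL
  have h0 : v + (0:F) • w ∈ arrRegion a b c ε := hray 0 le_rfl
  rw [zero_smul, add_zero] at h0
  have h0i : 0 < s * arrLine a b c i v := h0 i
  set t : F := (s * arrLine a b c i v) / (-(s * L)) with hts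
  have ht : 0 ≤ t := div_nonneg h0i.le (by linarith)
  have h1 : 0 < s * arrLine a b c i (v + t • w) := hray t ht i
  have hexp : s * arrLine a b c i (v + t • w) = s * arrLine a b c i v + t * (s * L) := by
    simp only [arrLine, Prod.fst_add, Prod.snd_add, Prod.smul_fst, Prod.smul_snd,
      smul_eq_mul, hL, hs]
    ring
  have hne : -(s * L) ≠ 0 := by linarith
  have hcanc : t * (s * L) = -(s * arrLine a b c i v) := by
    rw [hts]
    field_simp
    rw [mul_div_assoc, div_self (by intro h; rw [h, mul_zero] at hneg; exact lt_irrefl _ hneg), mul_one]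
  rw [hexp, hcanc] at h1
  linarith

lemma weak_to_downup {m : Fin n → F} {τ : Fin n → Bool} (u : F × F) (hu : u ≠ 0)
    (h : ∀ i, 0 ≤ (if τ i then (1:F) else -1) * (u.2 - m i * u.1)) :
    DownP m τ ∨ UpP m τ := by
  by_contra hc
  push_neg at hc
  obtain ⟨hnd, hnu⟩ := hc
  simp only [DownP, UpP, not_forall] at hnd hnu
  obtain ⟨i, j, hij, hj, hi⟩ := hnd
  obtain ⟨k, l, hkl, hk, hl⟩ := hnu
  rw [Bool.not_eq_true] at hi hl
  have Hj : 0 ≤ u.2 - m j * u.1 := by have := h j; rw [hj] at this; simpa using this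
  have Hi : u.2 - m i * u.1 ≤ 0 := by have := h i; rw [hi] at this; simp at this; linarith
  have Hk : 0 ≤ u.2 - m k * u.1 := by have := h k; rw [hk] at this; simpa using this
  have Hl : u.2 - m l * u.1 ≤ 0 := by have := h l; rw [hl] at this; simp at this; linarith
  have hu1le : u.1 ≤ 0 := by nlinarith
  have hu1ge : 0 ≤ u.1 := by nlinarith
  have hu1 : u.1 = 0 := le_antisymm hu1le hu1ge
  rw [hu1] at Hj Hi
  have hu2 : u.2 = 0 := by simp at Hj Hi; linarith
  exact hu (Prod.ext hu1 hu2)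

lemma down_exists_sep {m : Fin n → F} {τ : Fin n → Bool} (hm : Function.Injective m)
    (hd : DownP m τ) :
    ∃ z : F, ∀ i, (τ i = true → m i < z) ∧ (τ i = false → z < m i) := by
  classical
  set T := Finset.univ.filter (fun i : Fin n => τ i = true) with hT
  set Tc := Finset.univ.filter (fun i : Fin n => τ i = false) with hTc
  have hsep : ∀ i ∈ T, ∀ j ∈ Tc, m i < m j := by
    intro i hi j hj
    simp only [hT, hTc, Finset.mem_filter, Finset.mem_univ, true_and] at hi hj
    rcases lt_trichotomy (m i) (m j) with h | h | h
    · exact h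
    · exfalso; have := hm h; subst this; rw [hi] at hj; exact Bool.noConfusion hj
    · exfalso; have := hd j i h hi; rw [hj] at this; exact Bool.noConfusion this
  rcases (T.image m).eq_empty_or_nonempty with hTe | hTne
  · rcases (Tc.image m).eq_empty_or_nonempty with hTce | hTcne
    · refine ⟨0, fun i => ⟨fun h => ?_, fun h => ?_⟩⟩
      · exfalso
        have : m i ∈ T.image m := Finset.mem_image_of_mem m (by simp [hT, h])
        simp [hTe] at this
      · exfalso
        have : m i ∈ Tc.image m := Finset.mem_image_of_mem m (by simp [hTc, h])
        simp [hTce] at this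
    · refine ⟨(Tc.image m).min' hTcne - 1, fun i => ⟨fun h => ?_, fun h => ?_⟩⟩
      · exfalso
        have : m i ∈ T.image m := Finset.mem_image_of_mem m (by simp [hT, h])
        simp [hTe] at this
      · have : (Tc.image m).min' hTcne ≤ m i :=
          Finset.min'_le _ _ (Finset.mem_image_of_mem m (by simp [hTc, h]))
        linarith
  · rcases (Tc.image m).eq_empty_or_nonempty with hTce | hTcne
    · refine ⟨(T.image m).max' hTne + 1, fun i => ⟨fun h => ?_, fun h => ?_⟩⟩
      · have : m i ≤ (T.image m).max' hTne :=
          Finset.le_max' _ _ (Finset.mem_image_of_mem m (by simp [hT, h]))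
        linarith
      · exfalso
        have : m i ∈ Tc.image m := Finset.mem_image_of_mem m (by simp [hTc, h])
        simp [hTce] at this
    · have hlt : (T.image m).max' hTne < (Tc.image m).min' hTcne := by
        obtain ⟨x, hx, hxe⟩ := Finset.mem_image.mp ((T.image m).max'_mem hTne)
        obtain ⟨y, hy, hye⟩ := Finset.mem_image.mp ((Tc.image m).min'_mem hTcne)
        rw [← hxe, ← hye]
        exact hsep x hx y hy
      refine ⟨((T.image m).max' hTne + (Tc.image m).min' hTcne) / 2,
        fun i => ⟨fun h => ?_, fun h => ?_⟩⟩
      · have : m i ≤ (T.image m).max' hTne :=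
          Finset.le_max' _ _ (Finset.mem_image_of_mem m (by simp [hT, h]))
        linarith
      · have : (Tc.image m).min' hTcne ≤ m i :=
          Finset.min'_le _ _ (Finset.mem_image_of_mem m (by simp [hTc, h]))
        linarith

lemma downup_to_strict {m : Fin n → F} {τ : Fin n → Bool} (hm : Function.Injective m)
    (h : DownP m τ ∨ UpP m τ) :
    ∃ u : F × F, ∀ i, 0 < (if τ i then (1:F) else -1) * (u.2 - m i * u.1) := by
  rcases h with hd | hu
  · obtain ⟨z, hz⟩ := down_exists_sep hm hd
    refine ⟨(1, z), fun i => ?_⟩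
    cases hτ : τ i
    · have := (hz i).2 hτ
      simp only [hτ]
      simp only [Bool.false_eq_true, if_neg (by simp : ¬(False : Prop))]
      nlinarith
    · have := (hz i).1 hτ
      simp [hτ]
      nlinarith
  · have hm' : Function.Injective (fun i => -m i) := fun i j hij => hm (neg_injective hij)
    obtain ⟨z, hz⟩ := down_exists_sep hm' ((up_iff_down_neg m τ).mp hu)
    refine ⟨(-1, z), fun i => ?_⟩
    cases hτ : τ i
    · have := (hz i).2 hτ
      simp [hτ]
      nlinarith
    · have := (hz i).1 hτ
      simp [hτ]
      nlinarith

end Aux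


/-- A line arrangement of `n ≥ 1` lines in the plane over a linearly ordered field
(no two parallel, no three concurrent) has exactly `2n` unbounded regions. -/
theorem count_unbounded_regions_of_line_arrangement
    {F : Type*} [Field F] [LinearOrder F] [IsStrictOrderedRing F] (n : ℕ) (hn : 1 ≤ n)
    (a b c : Fin n → F)
    (hnd : ∀ i : Fin n, (a i, b i) ≠ (0, 0))
    (hpar : ∀ i j : Fin n, i ≠ j → a i * b j ≠ a j * b i)
    (hconc : ∀ i j k : Fin n, i ≠ j → j ≠ k → i ≠ k →
      ¬ ∃ p : F × F, arrLine a b c i p = 0 ∧ arrLine a b c j p = 0 ∧ arrLine a b c k p = 0) :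
    Nat.card {ε : Fin n → Bool // (arrRegion a b c ε).Nonempty ∧
      arrUnbounded (arrRegion a b c ε)} = 2 * n := by
  classical
  -- choose d so that all b i + d * a i are nonzero
  obtain ⟨d, hdnot⟩ := Finset.exists_notMem
    (Finset.univ.image (fun i : Fin n => -(b i) / a i))
  have hb' : ∀ i, b i + d * a i ≠ 0 := by
    intro i h
    rcases eq_or_ne (a i) 0 with h0 | h0
    · rw [h0, mul_zero, add_zero] at h
      exact hnd i (by rw [h0, h])
    · apply hdnot
      simp only [Finset.mem_image, Finset.mem_univ, true_and]
      refine ⟨i, ?_⟩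
      field_simp
      linarith
  set b' : Fin n → F := fun i => b i + d * a i with hb'def
  set m : Fin n → F := fun i => -(a i) / b' i with hmdef
  have hm : Function.Injective m := by
    intro i j hij
    by_contra hne
    apply hpar i j hne
    have h2 : -(a i) * b' j = -(a j) * b' i := (div_eq_div_iff (hb' i) (hb' j)).mp hij
    simp only [hb'def] at h2
    linear_combination -h2
  have hbm : ∀ i, b' i * m i = -(a i) := by
    intro i
    have hmi : m i = -(a i) / b' i := rfl
    rw [hmi, mul_comm]
    exact div_mul_cancel₀ _ (hb' i)
  have hid : ∀ (i : Fin n) (p : F × F),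
      a i * (p.1 + d * p.2) + b i * p.2 = b' i * (p.2 - m i * p.1) := by
    intro i p
    have hb2 : b' i = b i + d * a i := rfl
    linear_combination p.1 * hbm i - p.2 * hb2
  set τmap : (Fin n → Bool) → (Fin n → Bool) := fun ε i => ε i == decide (0 < b' i)
    with hτdef
  have hinv : Function.Involutive τmap := by
    intro ε
    funext i
    simp only [hτdef]
    cases ε i <;> cases decide (0 < b' i) <;> rfl
  have key : ∀ ε : Fin n → Bool,
      ((arrRegion a b c ε).Nonempty ∧ arrUnbounded (arrRegion a b c ε)) ↔
      (DownP m (τmap ε) ∨ UpP m (τmap ε)) := by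
    intro ε
    constructor
    · rintro ⟨-, hub⟩
      obtain ⟨w, hw0, hw⟩ := P_to_weak a b c ε hub
      set u : F × F := (w.1 - d * w.2, w.2) with hu
      have hu0 : u ≠ 0 := by
        intro h
        apply hw0
        have h1 : u.1 = 0 := by rw [h]; rfl
        have h2 : u.2 = 0 := by rw [h]; rfl
        simp only [hu] at h1 h2
        have : w.1 = 0 := by rw [h2] at h1; simpa using h1
        exact Prod.ext this h2
      refine weak_to_downup u hu0 (fun i => ?_)
      have hwi := hw i
      have hrw : a i * w.1 + b i * w.2 = b' i * (u.2 - m i * u.1) := by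
        have := hid i u
        simp only [hu] at this ⊢
        linarith [this]
      rw [hrw] at hwi
      have hres := (sign_transfer_le (ε i) (decide (0 < b' i)) (b' i) (u.2 - m i * u.1) (hb' i) (by simp)).mp hwi
      simpa only [hτdef] using hres
    · intro h
      obtain ⟨u, hu⟩ := downup_to_strict hm h
      apply strict_to_P hn a b c ε
      refine ⟨(u.1 + d * u.2, u.2), fun i => ?_⟩
      have hrw : a i * (u.1 + d * u.2, u.2).1 + b i * (u.1 + d * u.2, u.2).2 =
          b' i * (u.2 - m i * u.1) := hid i u
      rw [hrw]
      have hui := hu i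
      simp only [hτdef] at hui
      exact (sign_transfer_lt (ε i) (decide (0 < b' i)) (b' i) (u.2 - m i * u.1) (hb' i) (by simp)).mpr hui
  have e1 : {ε : Fin n → Bool // (arrRegion a b c ε).Nonempty ∧
      arrUnbounded (arrRegion a b c ε)} ≃
      {ε : Fin n → Bool // DownP m (τmap ε) ∨ UpP m (τmap ε)} :=
    Equiv.subtypeEquivRight key
  have e2 : {ε : Fin n → Bool // DownP m (τmap ε) ∨ UpP m (τmap ε)} ≃
      {τ : Fin n → Bool // DownP m τ ∨ UpP m τ} :=
    (Function.Involutive.toPerm τmap hinv).subtypeEquiv (fun ε => Iff.rfl)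
  rw [Nat.card_congr (e1.trans e2), count_downup hn hm]
end

section
/- Let F be a linearly ordered field and let L_1, …, L_n be a line arrangement in F² with n ≥ 1. Then the number of bounded regions of the arrangement equals (n−1)(n−2)/2, i.e., C(n−1, 2). -/
set_option linter.unusedSectionVars false
set_option linter.unnecessarySeqFocus false
set_option linter.unusedVariables false
set_option maxHeartbeats 1000000

namespace ArrCore

variable {F : Type*} [Field F] [LinearOrder F] [IsStrictOrderedRing F] {n : ℕ}

/-- value of line `i` at abscissa `x` -/
def lnv (m k : Fin n → F) (i : Fin n) (x : F) : F := m i * x + k i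

/-- crossing abscissa of lines `t` and `f` -/
def xvv (m k : Fin n → F) (t f : Fin n) : F := (k t - k f) / (m f - m t)

/-- region of sign vector for normalized lines -/
def Reg (m k : Fin n → F) (ε : Fin n → Bool) : Set (F × F) :=
  {p : F × F | ∀ i, (ε i = true → lnv m k i p.1 < p.2) ∧ (ε i = false → p.2 < lnv m k i p.1)}

/-- candidate sign vector of the region to the upper-right of the vertex of lines i, j -/
def epsv (m k : Fin n → F) (i j : Fin n) : Fin n → Bool :=
  fun l => decide (l = j ∨ lnv m k l (xvv m k i j) < lnv m k i (xvv m k i j))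

/-- the set of abscissas where the slab is nonempty -/
def Sx (m k : Fin n → F) (ε : Fin n → Bool) (x : F) : Prop :=
  ∀ t f, ε t = true → ε f = false → lnv m k t x < lnv m k f x

def special (m : Fin n → F) (ε : Fin n → Bool) : Prop :=
  ∀ t f, ε t = true → ε f = false → m t < m f

def NoConc (m k : Fin n → F) : Prop :=
  ∀ i j l : Fin n, i ≠ j → j ≠ l → i ≠ l → ∀ x : F,
    lnv m k i x = lnv m k j x → lnv m k j x ≠ lnv m k l x

lemma xvv_comm (m k : Fin n → F) (t f : Fin n) : xvv m k t f = xvv m k f t := by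
  unfold xvv
  rw [show k t - k f = -(k f - k t) by ring, show m f - m t = -(m t - m f) by ring,
    neg_div_neg_eq]


variable {m k : Fin n → F}

lemma lnv_sub (h : m t ≠ m f) (x : F) :
    lnv m k f x - lnv m k t x = (m f - m t) * (x - xvv m k t f) := by
  unfold lnv xvv
  have h' : m f - m t ≠ 0 := sub_ne_zero.mpr (Ne.symm h)
  field_simp
  ring

lemma lt_iff_of_slope_lt (h : m t < m f) (x : F) :
    lnv m k t x < lnv m k f x ↔ xvv m k t f < x := by
  have := lnv_sub (k := k) h.ne x
  constructor
  · intro hx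
    nlinarith [sub_pos.mpr h, sub_pos.mpr hx]
  · intro hx
    nlinarith [sub_pos.mpr h, sub_pos.mpr hx]

lemma lnv_eq_at_xvv (h : m t ≠ m f) : lnv m k t (xvv m k t f) = lnv m k f (xvv m k t f) := by
  have := lnv_sub (k := k) h (xvv m k t f)
  have : lnv m k f (xvv m k t f) - lnv m k t (xvv m k t f) = 0 := by
    rw [this]; ring
  linarith

lemma eq_imp_xvv (h : m t ≠ m f) (hx : lnv m k t x = lnv m k f x) : x = xvv m k t f := by
  have h2 := lnv_sub (k := k) h x
  rw [hx, sub_self] at h2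
  have h' : m f - m t ≠ 0 := sub_ne_zero.mpr (Ne.symm h)
  have := (mul_eq_zero.mp h2.symm).resolve_left h'
  linarith [sub_eq_zero.mp this]

/-- a positive affine function at two points is positive in between -/
lemma aff_pos_between {s b p q x : F} (hpx : p ≤ x) (hxq : x ≤ q)
    (hp : 0 < s * p + b) (hq : 0 < s * q + b) : 0 < s * x + b := by
  rcases le_or_gt 0 s with hs | hs
  · nlinarith
  · nlinarith

lemma Sx_convex {ε : Fin n → Bool} {p q x : F} (hp : Sx m k ε p) (hq : Sx m k ε q)
    (hpx : p ≤ x) (hxq : x ≤ q) : Sx m k ε x := by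
  intro t f ht hf
  have h1 := hp t f ht hf
  have h2 := hq t f ht hf
  have key : ∀ y : F, (lnv m k t y < lnv m k f y ↔ 0 < (m f - m t) * y + (k f - k t)) := by
    intro y; unfold lnv; constructor <;> intro <;> nlinarith
  rw [key] at h1 h2 ⊢
  exact aff_pos_between hpx hxq h1 h2

lemma Sx_of_mem {ε : Fin n → Bool} {p : F × F} (hp : p ∈ Reg m k ε) : Sx m k ε p.1 := by
  intro t f ht hf
  exact lt_trans ((hp t).1 ht) ((hp f).2 hf)


section
variable (hm : Function.Injective m) (hc : NoConc m k)

lemma ne_of_slope_lt {i j : Fin n} (hij : m j < m i) : i ≠ j :=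
  fun h => absurd hij (by rw [h]; exact lt_irrefl _)

lemma epsv_self_j (i j : Fin n) : epsv m k i j j = true := by simp [epsv]

lemma epsv_self_i {i j : Fin n} (hij : m j < m i) : epsv m k i j i = false := by
  simp [epsv, ne_of_slope_lt hij]

include hm in
lemma ne_of_eps {ε : Fin n → Bool} {t f : Fin n} (ht : ε t = true) (hf : ε f = false) :
    m t ≠ m f := by
  intro h
  have := hm h
  subst this
  rw [ht] at hf; exact Bool.true_eq_false.mp hf

/-- V1: at the vertex, true-lines are below false-lines -/
lemma at_vertex {i j : Fin n} (hij : m j < m i) :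
    ∀ t f, epsv m k i j t = true → epsv m k i j f = false →
      lnv m k t (xvv m k i j) ≤ lnv m k f (xvv m k i j) := by
  intro t f ht hf
  set x0 := xvv m k i j with hx0
  have hy : lnv m k i x0 = lnv m k j x0 := by
    have := lnv_eq_at_xvv (m := m) (k := k) (t := i) (f := j) (ne_of_gt hij)
    rw [hx0]; exact this
  simp only [epsv, decide_eq_true_eq, decide_eq_false_iff_not, not_or, not_lt] at ht hf
  rcases ht with rfl | ht
  · calc lnv m k t x0 = lnv m k i x0 := hy.symm
    _ ≤ lnv m k f x0 := hf.2
  · exact le_trans ht.le hf.2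

lemma sign_change {t f : Fin n} {x y : F} (h : m t ≠ m f) (hxy : x < y)
    (hx : lnv m k f x < lnv m k t x) (hy : lnv m k t y < lnv m k f y) :
    m t < m f ∧ x < xvv m k t f := by
  have e1 := lnv_sub (k := k) h x
  have e2 := lnv_sub (k := k) h y
  rcases lt_or_gt_of_ne h with hlt | hgt
  · refine ⟨hlt, ?_⟩
    nlinarith [sub_pos.mpr hlt]
  · exfalso
    nlinarith [sub_pos.mpr hgt]

include hm hc in
/-- the per-pair step for V2 -/
lemma key_step {i j : Fin n} (hij : m j < m i) {x : F} (hx : xvv m k i j < x)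
    (hbd : ∀ t' f' : Fin n, xvv m k i j < xvv m k t' f' → x < xvv m k t' f')
    {t f : Fin n} (ht : epsv m k i j t = true) (hf : epsv m k i j f = false) :
    lnv m k t x < lnv m k f x := by
  set x0 := xvv m k i j with hx0
  have hij' : i ≠ j := ne_of_slope_lt hij
  have hy : lnv m k i x0 = lnv m k j x0 := by
    have := lnv_eq_at_xvv (m := m) (k := k) (t := i) (f := j) (ne_of_gt hij)
    rw [hx0]; exact this
  have hV1 := at_vertex (m := m) (k := k) hij t f ht hf
  have hmtf : m t ≠ m f := ne_of_eps hm ht hf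
  have htf : t ≠ f := fun h => hmtf (congrArg m h)
  rcases eq_or_lt_of_le hV1 with heq | hlt
  · -- equality at x0 forces t = j, f = i
    simp only [epsv, decide_eq_true_eq, decide_eq_false_iff_not, not_or, not_lt] at ht hf
    have htj : t = j := by
      rcases ht with rfl | ht
      · rfl
      · exfalso; rw [heq] at ht; exact absurd (lt_of_lt_of_le ht hf.2) (lt_irrefl _)
    subst htj
    have hfi : f = i := by
      by_contra hfi
      exact hc i t f hij' (fun h => hf.1 h.symm) (fun h => hfi h.symm) x0 hy
        (heq ▸ rfl)
    subst hfi
    rw [lt_iff_of_slope_lt hij, xvv_comm (m := m) (k := k)]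
    exact hx
  · -- strict at x0; show it persists up to x
    by_contra hcon
    push_neg at hcon
    rcases eq_or_lt_of_le hcon with heqx | hltx
    · have hxeq := eq_imp_xvv hmtf heqx.symm
      have h1 : x0 < xvv m k t f := hxeq ▸ hx
      have h2 := hbd t f h1
      rw [← hxeq] at h2
      exact lt_irrefl x h2
    · obtain ⟨hslope, hcross⟩ := sign_change (f := t) (Ne.symm hmtf) hx hlt hltx
      have h2 := hbd f t hcross
      rw [lt_iff_of_slope_lt hslope] at hltx
      linarith

include hm hc in
/-- V2 -/
lemma right_open {i j : Fin n} (hij : m j < m i) :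
    ∃ x1, xvv m k i j < x1 ∧ ∀ x, xvv m k i j < x → x ≤ x1 → Sx m k (epsv m k i j) x := by
  classical
  set x0 := xvv m k i j with hx0
  set D : Finset F :=
    ((Finset.univ ×ˢ Finset.univ).filter
      (fun p : Fin n × Fin n => x0 < xvv m k p.1 p.2)).image (fun p => xvv m k p.1 p.2) with hD
  have hDgt : ∀ z ∈ D, x0 < z := by
    intro z hz
    simp only [hD, Finset.mem_image, Finset.mem_filter] at hz
    obtain ⟨p, ⟨_, hp⟩, rfl⟩ := hz
    exact hp
  have hDmem : ∀ t' f' : Fin n, x0 < xvv m k t' f' → xvv m k t' f' ∈ D := by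
    intro t' f' h
    simp only [hD, Finset.mem_image, Finset.mem_filter]
    exact ⟨(t', f'), ⟨by simp, h⟩, rfl⟩
  by_cases hne : D.Nonempty
  · refine ⟨(x0 + D.min' hne) / 2, by linarith [hDgt _ (D.min'_mem hne)], ?_⟩
    intro x hx hxle t f ht hf
    refine key_step hm hc hij hx (fun t' f' h => ?_) ht hf
    calc x ≤ (x0 + D.min' hne)/2 := hxle
    _ < D.min' hne := by linarith [hDgt _ (D.min'_mem hne)]
    _ ≤ xvv m k t' f' := D.min'_le _ (hDmem t' f' h)
  · refine ⟨x0 + 1, by linarith, ?_⟩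
    intro x hx hxle t f ht hf
    exact key_step hm hc hij hx
      (fun t' f' h => absurd ⟨_, hDmem t' f' h⟩ hne) ht hf

include hm hc in
lemma inj_aux {i j i' j' : Fin n} (hij : m j < m i) (hij' : m j' < m i')
    (he : epsv m k i j = epsv m k i' j') (hlt : xvv m k i j < xvv m k i' j') : False := by
  set x0 := xvv m k i j with hx0
  set x0' := xvv m k i' j' with hx0'
  obtain ⟨x1, hx1, hS1⟩ := right_open hm hc hij
  obtain ⟨x1', hx1', hS1'⟩ := right_open hm hc hij'
  set p := min x1 ((x0 + x0')/2) with hp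
  have hpgt : x0 < p := lt_min hx1 (by linarith)
  have hple : p < x0' := lt_of_le_of_lt (min_le_right _ _) (by linarith)
  have hSp : Sx m k (epsv m k i j) p := hS1 p hpgt (min_le_left _ _)
  have hSq : Sx m k (epsv m k i j) x1' := by
    rw [he]; exact hS1' x1' hx1' le_rfl
  have hSx0' : Sx m k (epsv m k i j) x0' := Sx_convex hSp hSq hple.le hx1'.le
  have h1 : epsv m k i j j' = true := by rw [he]; exact epsv_self_j i' j'
  have h2 : epsv m k i j i' = false := by rw [he]; exact epsv_self_i hij'
  have := hSx0' j' i' h1 h2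
  have heq : lnv m k j' x0' = lnv m k i' x0' := by
    have := lnv_eq_at_xvv (m := m) (k := k) (t := i') (f := j') (ne_of_gt hij')
    rw [hx0']; exact this.symm
  rw [heq] at this
  exact lt_irrefl _ this

include hm hc in
/-- V3: injectivity -/
lemma epsv_inj {i j i' j' : Fin n} (hij : m j < m i) (hij' : m j' < m i')
    (he : epsv m k i j = epsv m k i' j') : i = i' ∧ j = j' := by
  set x0 := xvv m k i j with hx0
  set x0' := xvv m k i' j' with hx0'
  rcases lt_trichotomy x0 x0' with h | h | h
  · exact absurd (inj_aux hm hc hij hij' he h) id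
  · -- same abscissa
    have hyi : lnv m k i x0 = lnv m k j x0 := by
      have := lnv_eq_at_xvv (m := m) (k := k) (t := i) (f := j) (ne_of_gt hij)
      rw [hx0]; exact this
    have hyi' : lnv m k i' x0' = lnv m k j' x0' := by
      have := lnv_eq_at_xvv (m := m) (k := k) (t := i') (f := j') (ne_of_gt hij')
      rw [hx0']; exact this
    have hjj : j = j' := by
      by_contra hne
      have e1 : epsv m k i j j' = true := by rw [he]; exact epsv_self_j i' j'
      have e2 : epsv m k i' j' j = true := by rw [← he]; exact epsv_self_j i j
      simp only [epsv, decide_eq_true_eq] at e1 e2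
      rcases e1 with h1 | h1
      · exact hne h1.symm
      rcases e2 with h2 | h2
      · exact hne h2
      rw [← hx0] at h1
      rw [← hx0'] at h2
      rw [← h] at h2 hyi'
      linarith
    subst hjj
    refine ⟨?_, rfl⟩
    by_contra hii
    have f1 : epsv m k i j i' = false := by rw [he]; exact epsv_self_i hij'
    have f2 : epsv m k i' j i = false := by rw [← he]; exact epsv_self_i hij
    simp only [epsv, decide_eq_false_iff_not, not_or, not_lt] at f1 f2
    rw [← hx0] at f1
    rw [← hx0'] at f2
    rw [← h] at f2
    have heqv : lnv m k j x0 = lnv m k i' x0 := by linarith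
    exact hc i j i' (ne_of_slope_lt hij) (Ne.symm (ne_of_slope_lt hij')) hii x0 hyi heqv
  · exact absurd (inj_aux hm hc hij' hij he.symm h) id

include hm hc in
/-- V4: each vertex's candidate region is nonempty -/
lemma reg_nonempty {i j : Fin n} (hij : m j < m i) : (Reg m k (epsv m k i j)).Nonempty := by
  classical
  obtain ⟨x1, hx1, hS⟩ := right_open hm hc hij
  have hSx : Sx m k (epsv m k i j) x1 := hS x1 hx1 le_rfl
  set T := Finset.univ.filter (fun l => epsv m k i j l = true) with hT
  set Fs := Finset.univ.filter (fun l => epsv m k i j l = false) with hFs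
  have hjT : j ∈ T := by simp [hT, epsv_self_j]
  have hiF : i ∈ Fs := by simp [hFs, epsv_self_i hij]
  set L := T.sup' (⟨j, hjT⟩ : T.Nonempty) (fun l => lnv m k l x1) with hL
  set U := Fs.inf' (⟨i, hiF⟩ : Fs.Nonempty) (fun l => lnv m k l x1) with hU
  have hLU : L < U := by
    rw [hL]; refine (Finset.sup'_lt_iff ..).mpr ?_
    intro t htm
    rw [hU]; refine (Finset.lt_inf'_iff ..).mpr ?_
    intro f hfm
    exact hSx t f (by simpa [hT] using htm) (by simpa [hFs] using hfm)
  refine ⟨(x1, (L + U)/2), fun l => ⟨fun hl => ?_, fun hl => ?_⟩⟩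
  · have hlT : l ∈ T := by simp [hT, hl]
    have := Finset.le_sup' (fun l => lnv m k l x1) hlT
    simp only at this ⊢
    linarith
  · have hlF : l ∈ Fs := by simp [hFs, hl]
    have := Finset.inf'_le (fun l => lnv m k l x1) hlF
    simp only at this ⊢
    linarith

lemma no_ray_interval {lo hi u s : F} (hs : s ≠ 0)
    (h : ∀ t : F, 0 ≤ t → lo < u + t * s ∧ u + t * s < hi) : False := by
  rcases lt_or_gt_of_ne hs with hneg | hpos
  · set t0 := max 0 ((lo - u)/s + 1) with ht0
    have h1 : (lo - u)/s < t0 := lt_of_lt_of_le (by linarith) (le_max_right _ _)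
    have h2 : t0 * s < lo - u := by
      have := (div_lt_iff_of_neg hneg).mp h1
      linarith
    have := (h t0 (le_max_left _ _)).1
    linarith
  · set t0 := max 0 ((hi - u)/s + 1) with ht0
    have h1 : (hi - u)/s < t0 := lt_of_lt_of_le (by linarith) (le_max_right _ _)
    have h2 : hi - u < t0 * s := by
      have := (div_lt_iff₀ hpos).mp h1
      linarith
    have := (h t0 (le_max_left _ _)).2
    linarith

lemma ray_coord (v w : F × F) (t : F) :
    v + t • w = (v.1 + t * w.1, v.2 + t * w.2) := by
  ext <;> simp

include hm in
/-- V5a: a region with both an increasing and a decreasing (true,false) slope pair is bounded -/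
lemma not_unbounded_of_pairs {ε : Fin n → Bool}
    (hinc : ∃ t f, ε t = true ∧ ε f = false ∧ m t < m f)
    (hdec : ∃ t f, ε t = true ∧ ε f = false ∧ m f < m t) :
    ¬ arrUnbounded (Reg m k ε) := by
  obtain ⟨t2, f2, ht2, hf2, h2⟩ := hinc
  obtain ⟨t1, f1, ht1, hf1, h1⟩ := hdec
  rintro ⟨v, w, hw, hray⟩
  by_cases hw1 : w.1 = 0
  · have hw2 : w.2 ≠ 0 := by
      intro hw2; exact hw (Prod.ext hw1 hw2)
    refine no_ray_interval (lo := lnv m k t2 v.1) (hi := lnv m k f2 v.1) (u := v.2) hw2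
      (fun t ht => ?_)
    have hp := hray t ht
    rw [ray_coord, hw1, mul_zero, add_zero] at hp
    exact ⟨(hp t2).1 ht2, (hp f2).2 hf2⟩
  · refine no_ray_interval (lo := xvv m k t2 f2) (hi := xvv m k f1 t1) (u := v.1) hw1
      (fun t ht => ?_)
    have hp := hray t ht
    rw [ray_coord] at hp
    have hSxp : Sx m k ε (v.1 + t * w.1) := Sx_of_mem (p := (v.1 + t * w.1, v.2 + t * w.2)) hp
    constructor
    · rw [← lt_iff_of_slope_lt h2]
      exact hSxp t2 f2 ht2 hf2
    · have := hSxp t1 f1 ht1 hf1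
      have hx := lnv_sub (m := m) (k := k) (t := f1) (f := t1) (ne_of_gt h1).symm (v.1 + t * w.1)
      nlinarith [sub_pos.mpr h1]

include hm in
/-- V5b: special nonempty-sign regions are unbounded (rightward ray) -/
lemma unbounded_of_special {ε : Fin n → Bool} (hT : ∃ t, ε t = true) (hF : ∃ f, ε f = false)
    (hsp : special m ε) : arrUnbounded (Reg m k ε) := by
  classical
  obtain ⟨ta, hta⟩ := hT
  obtain ⟨fa, hfa⟩ := hF
  set Tset := Finset.univ.filter (fun l => ε l = true) with hTs
  set Fset := Finset.univ.filter (fun l => ε l = false) with hFsd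
  obtain ⟨t0, ht0m, ht0max⟩ := Finset.exists_max_image Tset m ⟨ta, by simp [hTs, hta]⟩
  obtain ⟨f0, hf0m, hf0min⟩ := Finset.exists_min_image Fset m ⟨fa, by simp [hFsd, hfa]⟩
  have ht0 : ε t0 = true := by simpa [hTs] using ht0m
  have hf0 : ε f0 = false := by simpa [hFsd] using hf0m
  set C : Finset F := (Finset.univ ×ˢ Finset.univ).image
    (fun p : Fin n × Fin n => xvv m k p.1 p.2) with hC
  have hCne : C.Nonempty := ⟨xvv m k t0 f0, by simp [hC]⟩
  set X0 := C.max' hCne + 1 with hX0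
  have hord : ∀ x : F, X0 ≤ x → ∀ l l' : Fin n, m l < m l' → lnv m k l x < lnv m k l' x := by
    intro x hx l l' hll
    rw [lt_iff_of_slope_lt hll]
    have : xvv m k l l' ∈ C := by simp [hC]
    have := C.le_max' _ this
    linarith
  refine ⟨(X0, (lnv m k t0 X0 + lnv m k f0 X0)/2), (1, (m t0 + m f0)/2), ?_, fun t ht => ?_⟩
  · intro h
    rw [Prod.ext_iff] at h
    exact one_ne_zero h.1
  · rw [ray_coord]
    set x := X0 + t * 1 with hx
    have hxX : X0 ≤ x := by rw [hx]; linarith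
    have hyeq : (lnv m k t0 X0 + lnv m k f0 X0)/2 + t * ((m t0 + m f0)/2)
        = (lnv m k t0 x + lnv m k f0 x)/2 := by
      rw [hx]; unfold lnv; ring
    rw [hyeq]
    have hb : lnv m k t0 x < lnv m k f0 x := hord x hxX t0 f0 (hsp t0 f0 ht0 hf0)
    intro l
    constructor
    · intro hl
      rcases eq_or_ne l t0 with rfl | hne
      · simp only; linarith
      · have hml : m l < m t0 :=
          lt_of_le_of_ne (ht0max l (by simp [hTs, hl])) (fun h => hne (hm h))
        have := hord x hxX l t0 hml
        simp only; linarith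
    · intro hl
      rcases eq_or_ne l f0 with rfl | hne
      · simp only; linarith
      · have hml : m f0 < m l :=
          lt_of_le_of_ne (hf0min l (by simp [hFsd, hl])) (fun h => hne (hm h.symm))
        have := hord x hxX f0 l hml
        simp only; linarith

include hm in
/-- V5b': anti-special nonempty-sign regions are unbounded (leftward ray) -/
lemma unbounded_of_antispecial {ε : Fin n → Bool} (hT : ∃ t, ε t = true) (hF : ∃ f, ε f = false)
    (hsp : ∀ t f, ε t = true → ε f = false → m f < m t) : arrUnbounded (Reg m k ε) := by
  classical
  obtain ⟨ta, hta⟩ := hT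
  obtain ⟨fa, hfa⟩ := hF
  set Tset := Finset.univ.filter (fun l => ε l = true) with hTs
  set Fset := Finset.univ.filter (fun l => ε l = false) with hFsd
  obtain ⟨t0, ht0m, ht0min⟩ := Finset.exists_min_image Tset m ⟨ta, by simp [hTs, hta]⟩
  obtain ⟨f0, hf0m, hf0max⟩ := Finset.exists_max_image Fset m ⟨fa, by simp [hFsd, hfa]⟩
  have ht0 : ε t0 = true := by simpa [hTs] using ht0m
  have hf0 : ε f0 = false := by simpa [hFsd] using hf0m
  set C : Finset F := (Finset.univ ×ˢ Finset.univ).image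
    (fun p : Fin n × Fin n => xvv m k p.1 p.2) with hC
  have hCne : C.Nonempty := ⟨xvv m k t0 f0, by simp [hC]⟩
  set X0 := C.min' hCne - 1 with hX0
  have hord : ∀ x : F, x ≤ X0 → ∀ l l' : Fin n, m l < m l' → lnv m k l' x < lnv m k l x := by
    intro x hx l l' hll
    have hsub := lnv_sub (m := m) (k := k) (t := l) (f := l') hll.ne x
    have : xvv m k l l' ∈ C := by simp [hC]
    have := C.min'_le _ this
    nlinarith [sub_pos.mpr hll]
  refine ⟨(X0, (lnv m k t0 X0 + lnv m k f0 X0)/2), (-1, -((m t0 + m f0)/2)), ?_, fun t ht => ?_⟩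
  · intro h
    rw [Prod.ext_iff] at h
    simp at h
  · rw [ray_coord]
    set x := X0 + t * (-1) with hx
    have hxX : x ≤ X0 := by rw [hx]; linarith
    have hyeq : (lnv m k t0 X0 + lnv m k f0 X0)/2 + t * (-((m t0 + m f0)/2))
        = (lnv m k t0 x + lnv m k f0 x)/2 := by
      rw [hx]; unfold lnv; ring
    rw [hyeq]
    have hb : lnv m k t0 x < lnv m k f0 x := hord x hxX f0 t0 (hsp t0 f0 ht0 hf0)
    intro l
    constructor
    · intro hl
      rcases eq_or_ne l t0 with rfl | hne
      · simp only; linarith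
      · have hml : m t0 < m l :=
          lt_of_le_of_ne (ht0min l (by simp [hTs, hl])) (fun h => hne (hm h.symm))
        have := hord x hxX t0 l hml
        simp only; linarith
    · intro hl
      rcases eq_or_ne l f0 with rfl | hne
      · simp only; linarith
      · have hml : m l < m f0 :=
          lt_of_le_of_ne (hf0max l (by simp [hFsd, hl])) (fun h => hne (hm h))
        have := hord x hxX l f0 hml
        simp only; linarith

lemma unbounded_of_allTrue {ε : Fin n → Bool} (hne : (Reg m k ε).Nonempty)
    (h : ∀ i, ε i = true) : arrUnbounded (Reg m k ε) := by
  obtain ⟨p, hp⟩ := hne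
  refine ⟨p, (0, 1), ?_, fun t ht => ?_⟩
  · intro hh; rw [Prod.ext_iff] at hh; exact one_ne_zero hh.2
  · rw [ray_coord]
    intro l
    refine ⟨fun _ => ?_, fun hl => by rw [h l] at hl; exact absurd hl (by simp)⟩
    have := (hp l).1 (h l)
    simp only
    simp only [mul_zero, add_zero, mul_one]
    linarith

lemma unbounded_of_allFalse {ε : Fin n → Bool} (hne : (Reg m k ε).Nonempty)
    (h : ∀ i, ε i = false) : arrUnbounded (Reg m k ε) := by
  obtain ⟨p, hp⟩ := hne
  refine ⟨p, (0, -1), ?_, fun t ht => ?_⟩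
  · intro hh; rw [Prod.ext_iff] at hh; simp at hh
  · rw [ray_coord]
    intro l
    refine ⟨fun hl => by rw [h l] at hl; exact absurd hl (by simp), fun _ => ?_⟩
    have := (hp l).2 (h l)
    simp only
    simp only [mul_zero, add_zero]
    linarith

include hm hc in
/-- V6 core: the maximal lower-bound crossing recovers the sign vector -/
lemma eps_of_max {ε : Fin n → Bool} {ts fs : Fin n}
    (h1 : ε ts = true) (h2 : ε fs = false) (h3 : m ts < m fs)
    (hmax : ∀ t f, ε t = true → ε f = false → m t < m f → xvv m k t f ≤ xvv m k ts fs)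
    {xb : F} (hS : Sx m k ε xb) : epsv m k fs ts = ε := by
  set A := xvv m k ts fs with hA
  have hAc : xvv m k fs ts = A := (xvv_comm (m := m) (k := k) ts fs).symm
  have hyA : lnv m k ts A = lnv m k fs A := by
    have := lnv_eq_at_xvv (m := m) (k := k) (t := ts) (f := fs) h3.ne
    rw [hA]; exact this
  have hxbA : A < xb := by
    rw [hA, ← lt_iff_of_slope_lt h3]
    exact hS ts fs h1 h2
  have htsfs : ts ≠ fs := fun h => absurd (congrArg m h) h3.ne
  funext l
  cases hl : ε l with
  | false =>
    simp only [epsv, hAc, decide_eq_false_iff_not, not_or, not_lt]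
    refine ⟨?_, ?_⟩
    · intro hlts; rw [hlts] at hl; rw [h1] at hl; exact absurd hl (by simp)
    · rcases eq_or_ne l fs with rfl | hlfs
      · exact le_rfl
      by_contra hcon
      push_neg at hcon
      -- lnv l A < lnv fs A, but lnv ts xb < lnv l xb
      have hx : lnv m k l A < lnv m k ts A := by rw [hyA]; exact hcon
      have hy : lnv m k ts xb < lnv m k l xb := hS ts l h1 hl
      obtain ⟨hsl, hcr⟩ := sign_change (f := l) (ne_of_eps hm h1 hl) hxbA hx hy
      have := hmax ts l h1 hl hsl
      linarith
  | true =>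
    simp only [epsv, hAc, decide_eq_true_eq]
    rcases eq_or_ne l ts with rfl | hlts
    · exact Or.inl rfl
    right
    rcases lt_trichotomy (lnv m k l A) (lnv m k fs A) with h | h | h
    · exact h
    · exfalso
      exact hc ts fs l htsfs
        (fun hh => by rw [hh] at h2; rw [h2] at hl; exact absurd hl (by simp))
        (Ne.symm hlts) A hyA (by rw [h])
    · exfalso
      have hy : lnv m k l xb < lnv m k fs xb := hS l fs hl h2
      obtain ⟨hsl, hcr⟩ := sign_change (t := l) (f := fs) (ne_of_eps hm hl h2) hxbA h hy
      have := hmax l fs hl h2 hsl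
      linarith

include hm hc in
/-- V6: surjectivity -/
lemma exists_pair_of_bounded {ε : Fin n → Bool} (hne : (Reg m k ε).Nonempty)
    (hnb : ¬ arrUnbounded (Reg m k ε)) :
    ∃ i j : Fin n, m j < m i ∧ ¬ special m (epsv m k i j) ∧ epsv m k i j = ε := by
  classical
  obtain ⟨p, hp⟩ := hne
  have hT : ∃ t, ε t = true := by
    by_contra h
    push_neg at h
    exact hnb (unbounded_of_allFalse ⟨p, hp⟩
      (fun i => by rcases hi : ε i with h' | h'; rfl; exact absurd hi (h i)))
  have hF : ∃ f, ε f = false := by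
    by_contra h
    push_neg at h
    exact hnb (unbounded_of_allTrue ⟨p, hp⟩
      (fun i => by rcases hi : ε i with h' | h'; exact absurd hi (h i); rfl))
  have hdec : ∃ t f, ε t = true ∧ ε f = false ∧ m f < m t := by
    by_contra h
    push_neg at h
    refine hnb (unbounded_of_special hm hT hF (fun t f ht hf => ?_))
    exact lt_of_le_of_ne (h t f ht hf) (ne_of_eps hm ht hf)
  have hinc : ∃ t f, ε t = true ∧ ε f = false ∧ m t < m f := by
    by_contra h
    push_neg at h
    refine hnb (unbounded_of_antispecial hm hT hF (fun t f ht hf => ?_))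
    exact lt_of_le_of_ne (h t f ht hf) (Ne.symm (ne_of_eps hm ht hf))
  obtain ⟨ti, fi, hti, hfi, hmi⟩ := hinc
  set Pl := (Finset.univ ×ˢ Finset.univ).filter
    (fun q : Fin n × Fin n => ε q.1 = true ∧ ε q.2 = false ∧ m q.1 < m q.2) with hPl
  have hPlne : Pl.Nonempty := ⟨(ti, fi), by simp [hPl, hti, hfi, hmi]⟩
  obtain ⟨q0, hq0m, hq0max⟩ := Finset.exists_max_image Pl (fun q => xvv m k q.1 q.2) hPlne
  simp only [hPl, Finset.mem_filter] at hq0m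
  obtain ⟨-, hq1, hq2, hq3⟩ := hq0m
  have hmax : ∀ t f, ε t = true → ε f = false → m t < m f → xvv m k t f ≤ xvv m k q0.1 q0.2 :=
    fun t f ht hf hmf => hq0max (t, f) (by simp [hPl, ht, hf, hmf])
  have heps := eps_of_max hm hc hq1 hq2 hq3 hmax (Sx_of_mem hp)
  refine ⟨q0.2, q0.1, hq3, ?_, heps⟩
  rw [heps]
  intro hsp
  obtain ⟨t, f, ht, hf, hmf⟩ := hdec
  exact absurd (hsp t f ht hf) (not_lt.mpr hmf.le)

include hm in
lemma exists_prefix : ∀ r, r ≤ n → ∃ T : Finset (Fin n), T.card = r ∧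
    ∀ a ∈ T, ∀ b ∉ T, m a < m b := by
  intro r
  induction r with
  | zero => exact fun _ => ⟨∅, rfl, by simp⟩
  | succ r ih =>
    intro h
    obtain ⟨T, hTc, hTp⟩ := ih (Nat.le_of_succ_le h)
    have hco : (Finset.univ \ T).Nonempty := by
      rw [← Finset.card_pos, Finset.card_sdiff_of_subset (Finset.subset_univ T)]
      simp only [Finset.card_univ, Fintype.card_fin, hTc]
      omega
    obtain ⟨b0, hb0m, hb0min⟩ := Finset.exists_min_image _ m hco
    have hb0T : b0 ∉ T := (Finset.mem_sdiff.mp hb0m).2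
    refine ⟨insert b0 T, by rw [Finset.card_insert_of_notMem hb0T, hTc], ?_⟩
    intro a ha b hb
    rw [Finset.mem_insert] at ha
    have hbT : b ∉ T := fun h' => hb (Finset.mem_insert_of_mem h')
    rcases ha with rfl | ha
    · have hbne : b ≠ a := fun h' => hb (h' ▸ Finset.mem_insert_self a T)
      exact lt_of_le_of_ne (hb0min b (Finset.mem_sdiff.mpr ⟨Finset.mem_univ b, hbT⟩))
        (fun h' => hbne (hm h'.symm))
    · exact hTp a ha b hbT

lemma prefix_unique {S1 S2 : Finset (Fin n)}
    (h1 : ∀ a ∈ S1, ∀ b ∉ S1, m a < m b) (h2 : ∀ a ∈ S2, ∀ b ∉ S2, m a < m b)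
    (hcard : S1.card = S2.card) : S1 = S2 := by
  by_cases hsub : S1 ⊆ S2
  · exact Finset.eq_of_subset_of_card_le hsub (le_of_eq hcard.symm)
  · obtain ⟨a, ha1, ha2⟩ := Finset.not_subset.mp hsub
    have hsub2 : ¬ S2 ⊆ S1 := by
      intro hs
      exact ha2 ((Finset.eq_of_subset_of_card_le hs (le_of_eq hcard)).symm ▸ ha1)
    obtain ⟨b, hb2, hb1⟩ := Finset.not_subset.mp hsub2
    exact absurd (h1 a ha1 b hb1) (not_lt.mpr (h2 b hb2 a ha2).le)

include hm hc in
/-- surjectivity for special pairs: every prefix split is realized by a vertex -/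
lemma exists_special_pair {T : Finset (Fin n)} (hTne : T.Nonempty) (hTco : ∃ b, b ∉ T)
    (hpre : ∀ a ∈ T, ∀ b ∉ T, m a < m b) :
    ∃ i j : Fin n, m j < m i ∧ epsv m k i j = (fun l => decide (l ∈ T)) := by
  classical
  set ε := (fun l => decide (l ∈ T)) with hε
  obtain ⟨ta, hta⟩ := hTne
  obtain ⟨fa, hfa⟩ := hTco
  set Pl := (Finset.univ ×ˢ Finset.univ).filter
    (fun q : Fin n × Fin n => ε q.1 = true ∧ ε q.2 = false ∧ m q.1 < m q.2) with hPl
  have hPlne : Pl.Nonempty := ⟨(ta, fa), by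
    simp [hPl, hε, hta, hfa, hpre ta hta fa hfa]⟩
  obtain ⟨q0, hq0m, hq0max⟩ := Finset.exists_max_image Pl (fun q => xvv m k q.1 q.2) hPlne
  simp only [hPl, Finset.mem_filter] at hq0m
  obtain ⟨-, hq1, hq2, hq3⟩ := hq0m
  have hmax : ∀ t f, ε t = true → ε f = false → m t < m f → xvv m k t f ≤ xvv m k q0.1 q0.2 :=
    fun t f ht hf hmf => hq0max (t, f) (by simp [hPl, ht, hf, hmf])
  have hS : Sx m k ε (xvv m k q0.1 q0.2 + 1) := by
    intro t f ht hf
    have htT : t ∈ T := by simpa [hε] using ht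
    have hfT : f ∉ T := by simpa [hε] using hf
    rw [lt_iff_of_slope_lt (hpre t htT f hfT)]
    linarith [hmax t f ht hf (hpre t htT f hfT)]
  exact ⟨q0.2, q0.1, hq3, eps_of_max hm hc hq1 hq2 hq3 hmax hS⟩

end

lemma count_arith (N A S G : ℕ) (h2A : 2*A = N*N - N) (hS : S = N - 1) (hG : G + S = A) :
    G = (N-1)*(N-2)/2 := by
  subst hS
  rcases N with _ | N
  · omega
  rcases N with _ | q
  · omega
  · have e1 : (q+2)*(q+2) = q*q + 4*q + 4 := by ring
    have e2 : (q + 2 - 1) * (q + 2 - 2) = q*q + q := by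
      have h1 : q + 2 - 1 = q + 1 := by omega
      have h2 : q + 2 - 2 = q := by omega
      rw [h1, h2]; ring
    rw [e1] at h2A
    rw [e2]
    omega

theorem core_count (hm : Function.Injective m) (hc : NoConc m k) :
    Nat.card {ε : Fin n → Bool // (Reg m k ε).Nonempty ∧ ¬ arrUnbounded (Reg m k ε)} =
      (n-1)*(n-2)/2 := by
  classical
  set GoodP : Finset (Fin n × Fin n) := Finset.univ.filter
    (fun p => m p.2 < m p.1 ∧ ¬ special m (epsv m k p.1 p.2)) with hGoodP
  -- the bijection
  have hcard1 : Nat.card {ε : Fin n → Bool // (Reg m k ε).Nonempty ∧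
      ¬ arrUnbounded (Reg m k ε)} = GoodP.card := by
    have hf : ∀ p : {p : Fin n × Fin n // p ∈ GoodP},
        (Reg m k (epsv m k p.1.1 p.1.2)).Nonempty ∧
          ¬ arrUnbounded (Reg m k (epsv m k p.1.1 p.1.2)) := by
      rintro ⟨⟨i, j⟩, hp⟩
      simp only [hGoodP, Finset.mem_filter, Finset.mem_univ, true_and] at hp
      obtain ⟨hij, hns⟩ := hp
      refine ⟨reg_nonempty hm hc hij, not_unbounded_of_pairs hm ?_ ?_⟩
      · exact ⟨j, i, epsv_self_j i j, epsv_self_i hij, hij⟩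
      · rw [special] at hns
        push_neg at hns
        obtain ⟨t, f, ht, hf, hmf⟩ := hns
        exact ⟨t, f, ht, hf, lt_of_le_of_ne hmf (Ne.symm (ne_of_eps hm ht hf))⟩
    set f : {p : Fin n × Fin n // p ∈ GoodP} → {ε : Fin n → Bool // (Reg m k ε).Nonempty ∧
        ¬ arrUnbounded (Reg m k ε)} := fun p => ⟨epsv m k p.1.1 p.1.2, hf p⟩ with hfdef
    have hbij : Function.Bijective f := by
      constructor
      · rintro ⟨⟨i, j⟩, hp⟩ ⟨⟨i', j'⟩, hp'⟩ heq
        simp only [hGoodP, Finset.mem_filter, Finset.mem_univ, true_and] at hp hp'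
        simp only [hfdef, Subtype.mk.injEq] at heq
        obtain ⟨h1, h2⟩ := epsv_inj hm hc hp.1 hp'.1 heq
        simp [Subtype.mk.injEq, Prod.mk.injEq, h1, h2]
      · rintro ⟨ε, hne, hnb⟩
        obtain ⟨i, j, hij, hns, heps⟩ := exists_pair_of_bounded hm hc hne hnb
        refine ⟨⟨(i, j), ?_⟩, ?_⟩
        · simp only [hGoodP, Finset.mem_filter, Finset.mem_univ, true_and]
          exact ⟨hij, hns⟩
        · simp only [hfdef, Subtype.mk.injEq]
          exact heps
    rw [Nat.card_congr (Equiv.ofBijective f hbij).symm, Nat.card_eq_finsetCard]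
  rw [hcard1]
  -- counting
  set AllP : Finset (Fin n × Fin n) := Finset.univ.filter (fun p => m p.2 < m p.1) with hAllP
  set SpecP : Finset (Fin n × Fin n) := Finset.univ.filter
    (fun p => m p.2 < m p.1 ∧ special m (epsv m k p.1 p.2)) with hSpecP
  have hsub : SpecP ⊆ AllP := by
    intro p hp
    simp only [hSpecP, hAllP, Finset.mem_filter, Finset.mem_univ, true_and] at hp ⊢
    exact hp.1
  have hGdiff : GoodP = AllP \ SpecP := by
    ext p
    simp only [hGoodP, hAllP, hSpecP, Finset.mem_sdiff, Finset.mem_filter, Finset.mem_univ,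
      true_and]
    tauto
  -- card of AllP
  set BP : Finset (Fin n × Fin n) := Finset.univ.filter (fun p => m p.1 < m p.2) with hBP
  have hswap : AllP.card = BP.card := by
    refine Finset.card_bij' (fun p _ => p.swap) (fun p _ => p.swap) ?_ ?_ ?_ ?_
    · intro p hp
      simp only [hAllP, Finset.mem_filter, Finset.mem_univ, true_and] at hp
      simp only [hBP, Finset.mem_filter, Finset.mem_univ, true_and, Prod.fst_swap,
        Prod.snd_swap]
      exact hp
    · intro p hp
      simp only [hBP, Finset.mem_filter, Finset.mem_univ, true_and] at hp
      simp only [hAllP, Finset.mem_filter, Finset.mem_univ, true_and, Prod.fst_swap,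
        Prod.snd_swap]
      exact hp
    · intro p _; exact Prod.swap_swap p
    · intro p _; exact Prod.swap_swap p
  have hdisj : Disjoint AllP BP := by
    rw [Finset.disjoint_left]
    intro p hp hp'
    simp only [hAllP, Finset.mem_filter, Finset.mem_univ, true_and] at hp
    simp only [hBP, Finset.mem_filter, Finset.mem_univ, true_and] at hp'
    exact absurd hp (not_lt.mpr hp'.le)
  have hunion : AllP ∪ BP = Finset.univ.filter (fun p : Fin n × Fin n => p.1 ≠ p.2) := by
    ext p
    simp only [Finset.mem_union, hAllP, hBP, Finset.mem_filter, Finset.mem_univ, true_and]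
    rw [or_comm, lt_or_lt_iff_ne]
    exact hm.ne_iff
  have hoff : Finset.univ.filter (fun p : Fin n × Fin n => p.1 ≠ p.2) =
      (Finset.univ : Finset (Fin n)).offDiag := by
    ext p
    simp [Finset.mem_offDiag]
  have hAcard : 2 * AllP.card = n*n - n := by
    have h1 := Finset.card_union_of_disjoint hdisj
    rw [hunion, hoff, Finset.offDiag_card] at h1
    simp only [Finset.card_univ, Fintype.card_fin] at h1
    omega
  -- card of SpecP
  have hScard : SpecP.card = n - 1 := by
    have : SpecP.card = (Finset.Ico 1 n).card := by
      refine Finset.card_bij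
        (fun p _ => (Finset.univ.filter (fun l => epsv m k p.1 p.2 l = true)).card) ?_ ?_ ?_
      · rintro ⟨i, j⟩ hp
        simp only [hSpecP, Finset.mem_filter, Finset.mem_univ, true_and] at hp
        rw [Finset.mem_Ico]
        constructor
        · rw [Nat.one_le_iff_ne_zero, ← Nat.pos_iff_ne_zero, Finset.card_pos]
          exact ⟨j, by simp [epsv_self_j]⟩
        · calc (Finset.univ.filter (fun l => epsv m k i j l = true)).card
              < Finset.univ.card := by
                refine Finset.card_lt_card ?_
                rw [Finset.ssubset_iff_of_subset (Finset.subset_univ _)]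
                exact ⟨i, Finset.mem_univ i, by simp [epsv_self_i hp.1]⟩
          _ = n := by simp
      · rintro ⟨i, j⟩ hp ⟨i', j'⟩ hp' hcard
        simp only [hSpecP, Finset.mem_filter, Finset.mem_univ, true_and] at hp hp'
        have hpre1 : ∀ a ∈ Finset.univ.filter (fun l => epsv m k i j l = true),
            ∀ b ∉ Finset.univ.filter (fun l => epsv m k i j l = true), m a < m b := by
          intro a ha b hb
          simp only [Finset.mem_filter, Finset.mem_univ, true_and] at ha hb
          exact hp.2 a b ha (by rcases h : epsv m k i j b; rfl; exact absurd h hb)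
        have hpre2 : ∀ a ∈ Finset.univ.filter (fun l => epsv m k i' j' l = true),
            ∀ b ∉ Finset.univ.filter (fun l => epsv m k i' j' l = true), m a < m b := by
          intro a ha b hb
          simp only [Finset.mem_filter, Finset.mem_univ, true_and] at ha hb
          exact hp'.2 a b ha (by rcases h : epsv m k i' j' b; rfl; exact absurd h hb)
        have hTT := prefix_unique hpre1 hpre2 hcard
        have heps : epsv m k i j = epsv m k i' j' := by
          funext l
          have : (epsv m k i j l = true) ↔ (epsv m k i' j' l = true) := by
            constructor
            · intro h
              have : l ∈ Finset.univ.filter (fun l => epsv m k i j l = true) := by simp [h]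
              rw [hTT] at this
              simpa using this
            · intro h
              have : l ∈ Finset.univ.filter (fun l => epsv m k i' j' l = true) := by simp [h]
              rw [← hTT] at this
              simpa using this
          rcases h1 : epsv m k i j l <;> rcases h2 : epsv m k i' j' l <;>
            simp [h1, h2] at this ⊢
        obtain ⟨h1, h2⟩ := epsv_inj hm hc hp.1 hp'.1 heps
        simp [Prod.mk.injEq, h1, h2]
      · intro r hr
        rw [Finset.mem_Ico] at hr
        obtain ⟨T, hTcard, hTpre⟩ := exists_prefix hm r (le_of_lt hr.2)
        have hTne : T.Nonempty := by
          rw [← Finset.card_pos, hTcard]; omega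
        have hTco : ∃ b, b ∉ T := by
          by_contra h
          push_neg at h
          have : T = Finset.univ := Finset.eq_univ_iff_forall.mpr h
          rw [this] at hTcard
          simp only [Finset.card_univ, Fintype.card_fin] at hTcard
          omega
        obtain ⟨i, j, hij, heps⟩ := exists_special_pair hm hc hTne hTco hTpre
        have hspec : special m (epsv m k i j) := by
          rw [heps]
          intro t f ht hf
          simp only [decide_eq_true_eq, decide_eq_false_iff_not] at ht hf
          exact hTpre t ht f hf
        refine ⟨(i, j), ?_, ?_⟩
        · simp only [hSpecP, Finset.mem_filter, Finset.mem_univ, true_and]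
          exact ⟨hij, hspec⟩
        · have hfT : Finset.univ.filter (fun l => epsv m k i j l = true) = T := by
            ext l
            simp [heps]
          show (Finset.univ.filter (fun l => epsv m k i j l = true)).card = r
          rw [hfT, hTcard]
    rw [this, Nat.card_Ico]
  -- assemble
  have hGcard : GoodP.card + SpecP.card = AllP.card := by
    rw [hGdiff, Finset.card_sdiff_of_subset hsub]
    have := Finset.card_le_card hsub
    omega
  exact count_arith n AllP.card SpecP.card GoodP.card hAcard hScard (hScard ▸ hGcard)

end ArrCore

open ArrCore in
/-- A line arrangement of `n ≥ 1` lines in the plane over a linearly ordered field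
(no two parallel, no three concurrent) has exactly `(n-1)(n-2)/2 = C(n-1, 2)` bounded
regions. -/
theorem count_bounded_regions_of_line_arrangement
    {F : Type*} [Field F] [LinearOrder F] [IsStrictOrderedRing F] (n : ℕ) (hn : 1 ≤ n)
    (a b c : Fin n → F)
    (hnd : ∀ i : Fin n, (a i, b i) ≠ (0, 0))
    (hpar : ∀ i j : Fin n, i ≠ j → a i * b j ≠ a j * b i)
    (hconc : ∀ i j k : Fin n, i ≠ j → j ≠ k → i ≠ k →
      ¬ ∃ p : F × F, arrLine a b c i p = 0 ∧ arrLine a b c j p = 0 ∧ arrLine a b c k p = 0) :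
    Nat.card {ε : Fin n → Bool // (arrRegion a b c ε).Nonempty ∧
      ¬ arrUnbounded (arrRegion a b c ε)} = (n - 1) * (n - 2) / 2 := by
  classical
  -- choose a shear parameter lam making all lines non-vertical
  obtain ⟨lam, hlam⟩ : ∃ lam : F, ∀ i, a i * lam + b i ≠ 0 := by
    obtain ⟨lam, hlam⟩ := Infinite.exists_notMem_finset
      ((Finset.univ : Finset (Fin n)).image (fun i => -(b i) / (a i)))
    refine ⟨lam, fun i h => ?_⟩
    by_cases ha : a i = 0
    · rw [ha, zero_mul, zero_add] at h
      exact hnd i (by rw [ha, h])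
    · refine hlam (Finset.mem_image.mpr ⟨i, Finset.mem_univ i, ?_⟩)
      field_simp
      linarith
  set B : Fin n → F := fun i => a i * lam + b i with hB
  set m : Fin n → F := fun i => -(a i / B i) with hmdef
  set k : Fin n → F := fun i => c i / B i with hkdef
  set mask : (Fin n → Bool) → (Fin n → Bool) :=
    fun ε i => if 0 < B i then ε i else !(ε i) with hmask
  have hmaskmask : ∀ ε, mask (mask ε) = ε := by
    intro ε; funext i
    by_cases h : 0 < B i <;> simp [hmask, h]
  -- the key affine identity
  have harr : ∀ i (p : F × F), arrLine a b c i (p.1 + lam * p.2, p.2)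
      = B i * (p.2 - lnv m k i p.1) := by
    intro i p
    have hBi := hlam i
    unfold arrLine lnv
    rw [hmdef, hkdef, hB]
    field_simp
    ring
  -- pointwise membership correspondence
  have hmem : ∀ (ε : Fin n → Bool) (p : F × F),
      p ∈ Reg m k (mask ε) ↔ (p.1 + lam * p.2, p.2) ∈ arrRegion a b c ε := by
    intro ε p
    unfold arrRegion Reg
    simp only [Set.mem_setOf_eq]
    refine forall_congr' (fun i => ?_)
    rw [harr i p]
    have hBi := hlam i
    by_cases hpos : 0 < B i
    · cases hε : ε i <;> simp [hmask, hpos, hε] <;>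
        constructor <;> intro h <;> nlinarith
    · have hneg : B i < 0 := lt_of_le_of_ne (not_lt.mp hpos) (hlam i)
      cases hε : ε i <;> simp [hmask, hpos, hε] <;>
        constructor <;> intro h <;> nlinarith
  -- nonemptiness correspondence
  have hne : ∀ ε : Fin n → Bool,
      (Reg m k (mask ε)).Nonempty ↔ (arrRegion a b c ε).Nonempty := by
    intro ε
    constructor
    · rintro ⟨q, hq⟩
      exact ⟨(q.1 + lam * q.2, q.2), (hmem ε q).mp hq⟩
    · rintro ⟨p, hp⟩
      refine ⟨(p.1 - lam * p.2, p.2), (hmem ε _).mpr ?_⟩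
      simpa [sub_add_cancel] using hp
  -- unboundedness correspondence
  have hub : ∀ ε : Fin n → Bool,
      arrUnbounded (Reg m k (mask ε)) ↔ arrUnbounded (arrRegion a b c ε) := by
    intro ε
    constructor
    · rintro ⟨v, w, hw, hr⟩
      refine ⟨(v.1 + lam * v.2, v.2), (w.1 + lam * w.2, w.2), ?_, fun t ht => ?_⟩
      · intro h
        rw [Prod.ext_iff] at h
        simp only at h
        apply hw
        have hw2 : w.2 = 0 := h.2
        have hw1 : w.1 = 0 := by have := h.1; rw [hw2] at this; simpa using this
        exact Prod.ext hw1 hw2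
      · have := (hmem ε (v + t • w)).mp (hr t ht)
        have hco : ((v + t • w).1 + lam * (v + t • w).2, (v + t • w).2)
            = (v.1 + lam * v.2, v.2) + t • (w.1 + lam * w.2, w.2) := by
          rw [Prod.ext_iff]
          constructor <;> simp <;> ring
        rwa [hco] at this
    · rintro ⟨v, w, hw, hr⟩
      refine ⟨(v.1 - lam * v.2, v.2), (w.1 - lam * w.2, w.2), ?_, fun t ht => ?_⟩
      · intro h
        rw [Prod.ext_iff] at h
        simp only at h
        apply hw
        have hw2 : w.2 = 0 := h.2
        have hw1 : w.1 = 0 := by have := h.1; rw [hw2] at this; simpa using this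
        exact Prod.ext hw1 hw2
      · rw [hmem ε]
        have hco : (((v.1 - lam * v.2, v.2) + t • (w.1 - lam * w.2, w.2)).1
            + lam * ((v.1 - lam * v.2, v.2) + t • (w.1 - lam * w.2, w.2)).2,
            ((v.1 - lam * v.2, v.2) + t • (w.1 - lam * w.2, w.2)).2) = v + t • w := by
          rw [Prod.ext_iff]
          constructor <;> simp <;> ring
        rw [hco]
        exact hr t ht
  -- the equivalence of subtypes
  have hprop : ∀ ε : Fin n → Bool,
      ((arrRegion a b c ε).Nonempty ∧ ¬ arrUnbounded (arrRegion a b c ε)) ↔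
      ((Reg m k (mask ε)).Nonempty ∧ ¬ arrUnbounded (Reg m k (mask ε))) := by
    intro ε
    rw [hne ε, hub ε]
  have e : {ε : Fin n → Bool // (arrRegion a b c ε).Nonempty ∧
      ¬ arrUnbounded (arrRegion a b c ε)} ≃
      {ε : Fin n → Bool // (Reg m k ε).Nonempty ∧ ¬ arrUnbounded (Reg m k ε)} :=
    { toFun := fun q => ⟨mask q.1, (hprop q.1).mp q.2⟩
      invFun := fun q => ⟨mask q.1, by
        have := (hprop (mask q.1)).mpr
        rw [hmaskmask] at this
        exact this q.2⟩
      left_inv := fun q => Subtype.ext (hmaskmask q.1)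
      right_inv := fun q => Subtype.ext (hmaskmask q.1) }
  rw [Nat.card_congr e]
  -- hypotheses of the core theorem
  have hm : Function.Injective m := by
    intro i j hij
    by_contra hne'
    apply hpar i j hne'
    rw [hmdef] at hij
    simp only [neg_inj] at hij
    have hBi := hlam i
    have hBj := hlam j
    rw [div_eq_div_iff hBi hBj] at hij
    nlinarith [hij]
  have hc : NoConc m k := by
    intro i j l hij hjl hil x h1 h2
    apply hconc i j l hij hjl hil
    refine ⟨(x + lam * lnv m k i x, lnv m k i x), ?_, ?_, ?_⟩
    · rw [show (x + lam * lnv m k i x, lnv m k i x)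
        = ((x, lnv m k i x).1 + lam * (x, lnv m k i x).2, (x, lnv m k i x).2) by rfl, harr]
      simp
    · rw [show (x + lam * lnv m k i x, lnv m k i x)
        = ((x, lnv m k i x).1 + lam * (x, lnv m k i x).2, (x, lnv m k i x).2) by rfl, harr]
      simp only
      rw [h1]
      simp
    · rw [show (x + lam * lnv m k i x, lnv m k i x)
        = ((x, lnv m k i x).1 + lam * (x, lnv m k i x).2, (x, lnv m k i x).2) by rfl, harr]
      simp only
      rw [h1, h2]
      simp
  rw [core_count hm hc]
end

section
/- Let F be a linearly ordered field and let L_1, …, L_n be a line arrangement in F² given by affine functions f_i. Let ε, ε' ∈ {−1,+1}ⁿ be sign vectors whose regions R_ε and R_{ε'} are nonempty, and let v ∈ R_ε and w ∈ R_{ε'}. Then the number of indices i such that the segment {(1−t)·v + t·w : t ∈ F, 0 ≤ t ≤ 1} meets the line L_i equals #{i : ε_i ≠ ε'_i}. In particular this crossing number between the two regions does not depend on the choice of the points v and w. (The crossing number between two regions is well defined.) -/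
/-- Sign-change criterion for an affine function on a segment. -/
lemma segment_zero_iff {F : Type*} [Field F] [LinearOrder F] [IsStrictOrderedRing F] (fv fw : F)
    (h : fv ≠ 0) (h' : fw ≠ 0) :
    (∃ t : F, 0 ≤ t ∧ t ≤ 1 ∧ (1 - t) * fv + t * fw = 0) ↔ fv * fw < 0 := by
  constructor
  · rintro ⟨t, ht0, ht1, hz⟩
    rcases lt_or_gt_of_ne h with hv | hv <;> rcases lt_or_gt_of_ne h' with hw | hw
    · exfalso
      have h1 : (1 - t) * fv ≤ 0 := mul_nonpos_of_nonneg_of_nonpos (by linarith) hv.le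
      have h2 : t * fw ≤ 0 := mul_nonpos_of_nonneg_of_nonpos ht0 hw.le
      have h1' : (1 - t) * fv = 0 := by linarith
      have h2' : t * fw = 0 := by linarith
      rcases mul_eq_zero.1 h1' with h3 | h3
      · have : t = 1 := by linarith
        subst this
        rcases mul_eq_zero.1 h2' with h4 | h4 <;> simp_all
      · exact h h3
    · nlinarith
    · nlinarith
    · exfalso
      have h1 : 0 ≤ (1 - t) * fv := mul_nonneg (by linarith) hv.le
      have h2 : 0 ≤ t * fw := mul_nonneg ht0 hw.le
      have h1' : (1 - t) * fv = 0 := by linarith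
      have h2' : t * fw = 0 := by linarith
      rcases mul_eq_zero.1 h1' with h3 | h3
      · have : t = 1 := by linarith
        subst this
        rcases mul_eq_zero.1 h2' with h4 | h4 <;> simp_all
      · exact h h3
  · intro hlt
    refine ⟨fv / (fv - fw), ?_, ?_, ?_⟩
    · rcases lt_or_gt_of_ne h with hv | hv
      · have hw : 0 < fw := by nlinarith
        have : fv - fw < 0 := by linarith
        exact le_of_lt (div_pos_of_neg_of_neg hv this)
      · have hw : fw < 0 := by nlinarith
        exact le_of_lt (div_pos hv (by linarith))
    · rcases lt_or_gt_of_ne h with hv | hv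
      · have hw : 0 < fw := by nlinarith
        have hd : fv - fw < 0 := by linarith
        rw [div_le_one_iff]
        exact Or.inr (Or.inr ⟨hd, by linarith⟩)
      · have hw : fw < 0 := by nlinarith
        have hd : 0 < fv - fw := by linarith
        rw [div_le_one hd]; linarith
    · have hd : fv - fw ≠ 0 := by
        intro hdz
        have : fv = fw := by linarith
        rw [this] at hlt
        exact absurd (mul_self_nonneg fw) (not_le.mpr hlt)
      field_simp
      ring

/-- The crossing number between two regions is well defined: for interior points
`v ∈ R_ε` and `w ∈ R_ε'`, the number of lines of the arrangement met by the segment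
from `v` to `w` equals `#{i : ε i ≠ ε' i}`; in particular it does not depend on the
choice of `v` and `w`. -/
theorem crossing_number_well_defined
    {F : Type*} [Field F] [LinearOrder F] [IsStrictOrderedRing F] (n : ℕ)
    (a b c : Fin n → F)
    (hnd : ∀ i : Fin n, (a i, b i) ≠ (0, 0))
    (hpar : ∀ i j : Fin n, i ≠ j → a i * b j ≠ a j * b i)
    (hconc : ∀ i j k : Fin n, i ≠ j → j ≠ k → i ≠ k →
      ¬ ∃ p : F × F, arrLine a b c i p = 0 ∧ arrLine a b c j p = 0 ∧ arrLine a b c k p = 0)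
    (ε ε' : Fin n → Bool) (v w : F × F)
    (hv : v ∈ arrRegion a b c ε) (hw : w ∈ arrRegion a b c ε') :
    Nat.card {i : Fin n // ∃ t : F, 0 ≤ t ∧ t ≤ 1 ∧
        arrLine a b c i ((1 - t) • v + t • w) = 0}
      = Nat.card {i : Fin n // ε i ≠ ε' i} := by
  refine Nat.card_congr (Equiv.subtypeEquivRight fun i => ?_)
  have hvi := hv i
  have hwi := hw i
  have haff : ∀ t : F, arrLine a b c i ((1 - t) • v + t • w)
      = (1 - t) * arrLine a b c i v + t * arrLine a b c i w := by
    intro t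
    simp only [arrLine, Prod.fst_add, Prod.snd_add, Prod.smul_fst, Prod.smul_snd,
      smul_eq_mul]
    ring
  set fv := arrLine a b c i v with hfv
  set fw := arrLine a b c i w with hfw
  have hvne : fv ≠ 0 := by
    intro h0; rw [h0, mul_zero] at hvi; exact lt_irrefl _ hvi
  have hwne : fw ≠ 0 := by
    intro h0; rw [h0, mul_zero] at hwi; exact lt_irrefl _ hwi
  simp only [haff]
  rw [segment_zero_iff fv fw hvne hwne]
  cases hε : ε i <;> cases hε' : ε' i <;> simp [hε, hε'] at hvi hwi ⊢ <;> nlinarith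
end
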